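/- arXiv:2508.14714 — 4 statements merged into one kernel-verified Lean document; each statement's English description precedes it below -/
import Mathlib

section
/- Let n ≥ 4 be an integer, let z : ZMod n → ℂ be injective, and let (A,B,C,D) be a cyclic 4-partition of ZMod n. Then the extended u-relation holds identically: ∏_{x∈A, y∈C} u_{xy}(z) + ∏_{x∈B, y∈D} u_{xy}(z) = 1. -/
namespace M0n

/-- `{i, j}` is a chord of the `n`-gon: `j ∉ {i-1, i, i+1}`. -/
def IsChord (n : ℕ) (p : Sym2 (ZMod n)) : Prop :=
  ∀ i j : ZMod n, p = s(i, j) → j ≠ i - 1 ∧ j ≠ i ∧ j ≠ i + 1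

instance (n : ℕ) [NeZero n] : DecidablePred (IsChord n) := fun p =>
  inferInstanceAs (Decidable (∀ i j : ZMod n, p = s(i, j) → j ≠ i - 1 ∧ j ≠ i ∧ j ≠ i + 1))

/-- The finite set `E` of chords of the `n`-gon. -/
def chords (n : ℕ) [NeZero n] : Finset (Sym2 (ZMod n)) :=
  Finset.univ.filter (IsChord n)

/-- `x` lies in the cyclic open interval `{i+1, …, j-1}` from `i` to `j`. -/
def CycBtw {n : ℕ} (i x j : ZMod n) : Prop :=
  0 < (x - i).val ∧ (x - i).val < (j - i).val

instance {n : ℕ} (i x j : ZMod n) : Decidable (CycBtw i x j) :=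
  inferInstanceAs (Decidable (0 < (x - i).val ∧ (x - i).val < (j - i).val))

/-- Two chords cross: exactly one endpoint of `q` lies in the cyclic open interval
from `i` to `j`, for every ordered representation `(i, j)` of `p`. -/
def Crosses (n : ℕ) (p q : Sym2 (ZMod n)) : Prop :=
  ∀ i j k l : ZMod n, p = s(i, j) → q = s(k, l) → Xor' (CycBtw i k j) (CycBtw i l j)

instance (n : ℕ) [NeZero n] (p q : Sym2 (ZMod n)) : Decidable (Crosses n p q) :=
  inferInstanceAs (Decidable (∀ i j k l : ZMod n,
    p = s(i, j) → q = s(k, l) → Xor (CycBtw i k j) (CycBtw i l j)))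

/-- The dihedral coordinate (cross-ratio)
`u_{ij}(z) = ((z i - z (j+1)) (z (i+1) - z j)) / ((z i - z j) (z (i+1) - z (j+1)))`,
well defined on unordered pairs. -/
def u {n : ℕ} {K : Type*} [Field K] (z : ZMod n → K) : Sym2 (ZMod n) → K :=
  Sym2.lift ⟨fun i j =>
    ((z i - z (j + 1)) * (z (i + 1) - z j)) / ((z i - z j) * (z (i + 1) - z (j + 1))), by
      intro i j
      have h1 : (z i - z (j + 1)) * (z (i + 1) - z j)
          = (z j - z (i + 1)) * (z (j + 1) - z i) := by ring
      have h2 : (z i - z j) * (z (i + 1) - z (j + 1))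
          = (z j - z i) * (z (j + 1) - z (i + 1)) := by ring
      dsimp only
      rw [h1, h2]⟩

/-- The cyclic interval `{a, a+1, …, a+m-1}` in `ZMod n`. -/
def cycInt {n : ℕ} (a : ZMod n) (m : ℕ) : Finset (ZMod n) :=
  (Finset.range m).image fun t : ℕ => a + (t : ZMod n)

/-- A partition of `ZMod n` into four nonempty cyclic intervals `A, B, C, D`
appearing in this cyclic order. -/
structure CyclicFourPartition (n : ℕ) where
  a : ZMod n
  p : ℕ
  q : ℕ
  r : ℕ
  t : ℕ
  hp : 0 < p
  hq : 0 < q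
  hr : 0 < r
  ht : 0 < t
  hsum : p + q + r + t = n

namespace CyclicFourPartition

variable {n : ℕ} (P : CyclicFourPartition n)

def A : Finset (ZMod n) := cycInt P.a P.p
def B : Finset (ZMod n) := cycInt (P.a + (P.p : ZMod n)) P.q
def C : Finset (ZMod n) := cycInt (P.a + (P.p : ZMod n) + (P.q : ZMod n)) P.r
def D : Finset (ZMod n) := cycInt (P.a + (P.p : ZMod n) + (P.q : ZMod n) + (P.r : ZMod n)) P.t

end CyclicFourPartition

/-- A sign pattern is consistent if it does not contradict any extended u-relation:
for every cyclic 4-partition `(A,B,C,D)`, one of the two products of signs is `1`. -/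
def Consistent (n : ℕ) (s : Sym2 (ZMod n) → ℤ) : Prop :=
  ∀ P : CyclicFourPartition n,
    (∏ x ∈ P.A, ∏ y ∈ P.C, s s(x, y)) = 1 ∨ (∏ x ∈ P.B, ∏ y ∈ P.D, s s(x, y)) = 1

/-- A sign pattern is realizable if it is the sign vector of the dihedral coordinates
of some injective real configuration. -/
def Realizable (n : ℕ) [NeZero n] (s : Sym2 (ZMod n) → ℤ) : Prop :=
  ∃ z : ZMod n → ℝ, Function.Injective z ∧ ∀ e ∈ chords n, Real.sign (u z e) = (s e : ℝ)

/-- The length of a chord `{i,j}`: `min (d, n - d)` where `d = (j - i).val`. -/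
def chordLength (n : ℕ) (p : Sym2 (ZMod n)) : ℕ :=
  Sym2.lift ⟨fun i j => min (j - i).val (i - j).val, fun _ _ => min_comm _ _⟩ p

/-- `Neg z`: the number of negative chords of a real configuration. -/
noncomputable def negCount (n : ℕ) [NeZero n] (z : ZMod n → ℝ) : ℕ :=
  Set.ncard {e : Sym2 (ZMod n) | e ∈ chords n ∧ u z e < 0}

/-- The set of real points of `M_{0,n}` in its dihedral embedding:
nowhere-zero real solutions of all primitive u-relations in `ℝ^E`. -/
def Vset (n : ℕ) [NeZero n] : Set ({e : Sym2 (ZMod n) // e ∈ chords n} → ℝ) :=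
  {w | (∀ c, w c ≠ 0) ∧ ∀ c,
    w c + ∏ e ∈ Finset.univ.filter
        (fun e : {e : Sym2 (ZMod n) // e ∈ chords n} => Crosses n e.1 c.1), w e = 1}

/-- The part `M_{0,n}(ℝ_s)` of `V` in the open orthant given by the sign pattern `s`. -/
def VsSet (n : ℕ) [NeZero n] (s : Sym2 (ZMod n) → ℤ) :
    Set ({e : Sym2 (ZMod n) // e ∈ chords n} → ℝ) :=
  {w ∈ Vset n | ∀ c : {e : Sym2 (ZMod n) // e ∈ chords n}, Real.sign (w c) = (s c.1 : ℝ)}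

lemma u_mk {n : ℕ} {K : Type*} [Field K] (z : ZMod n → K) (i j : ZMod n) :
    u z s(i, j)
      = ((z i - z (j + 1)) * (z (i + 1) - z j)) / ((z i - z j) * (z (i + 1) - z (j + 1))) := rfl

lemma div4 {K : Type*} [Field K] (a b c d : K) : (a / b) / (c / d) = (a * d) / (b * c) := by
  simp only [div_eq_mul_inv, mul_inv, inv_inv]; ring

lemma natCast_ne {n : ℕ} (x y : ℕ) (hxy : x < y) (h2 : y - x < n) :
    (x : ZMod n) ≠ (y : ZMod n) := by
  intro h
  rw [ZMod.natCast_eq_natCast_iff] at h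
  have h3 := (Nat.modEq_iff_dvd' hxy.le).1 h
  have h4 := Nat.le_of_dvd (by omega) h3
  omega

lemma telescope {K : Type*} [Field K] (f : ℕ → K) (m : ℕ) (hf : ∀ i ≤ m, f i ≠ 0) :
    ∏ i ∈ Finset.range m, f (i + 1) / f i = f m / f 0 := by
  induction m with
  | zero => simp [div_self (hf 0 le_rfl)]
  | succ m ih =>
    rw [Finset.prod_range_succ, ih (fun i hi => hf i (by omega))]
    have h0 := hf 0 (by omega)
    have hm := hf m (by omega)
    field_simp

lemma prod_cycInt {n : ℕ} {K : Type*} [CommMonoid K] (a : ZMod n) (m : ℕ) (hm : m ≤ n)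
    (f : ZMod n → K) :
    ∏ x ∈ cycInt a m, f x = ∏ t ∈ Finset.range m, f (a + (t : ZMod n)) := by
  rw [cycInt, Finset.prod_image]
  intro i hi j hj h
  simp only [Finset.coe_range, Set.mem_Iio, Finset.mem_coe, Finset.mem_range] at hi hj
  have h1 : (i : ZMod n) = (j : ZMod n) := by linear_combination h
  rw [ZMod.natCast_eq_natCast_iff, Nat.ModEq, Nat.mod_eq_of_lt (by omega),
    Nat.mod_eq_of_lt (by omega)] at h1
  exact h1

lemma rect_prod {n : ℕ} [NeZero n] {K : Type*} [Field K] (z : ZMod n → K) (a c : ZMod n)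
    (p r : ℕ) (hp : p ≤ n) (hr : r ≤ n)
    (H : ∀ s ≤ p, ∀ t ≤ r, z (a + (s : ZMod n)) ≠ z (c + (t : ZMod n))) :
    ∏ x ∈ cycInt a p, ∏ y ∈ cycInt c r, u z s(x, y)
      = ((z (a + (p : ZMod n)) - z c) * (z a - z (c + (r : ZMod n))))
        / ((z a - z c) * (z (a + (p : ZMod n)) - z (c + (r : ZMod n)))) := by
  set G : ℕ → K := fun s => (z (a + (s : ZMod n)) - z c) / (z (a + (s : ZMod n)) - z (c + (r : ZMod n))) with hGdef
  have hG : ∀ s ≤ p, G s ≠ 0 := by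
    intro s hs
    apply div_ne_zero
    · have := H s hs 0 (by omega)
      simpa using sub_ne_zero_of_ne this
    · exact sub_ne_zero_of_ne (H s hs r le_rfl)
  have inner : ∀ s : ℕ, s < p →
      ∏ y ∈ cycInt c r, u z s(a + (s : ZMod n), y) = G (s + 1) / G s := by
    intro s hs
    rw [prod_cycInt c r hr]
    set F : ℕ → K := fun t =>
      (z (a + (s : ZMod n)) - z (c + (t : ZMod n)))
        / (z (a + ((s + 1 : ℕ) : ZMod n)) - z (c + (t : ZMod n))) with hFdef
    have hF : ∀ t ≤ r, F t ≠ 0 := by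
      intro t ht
      apply div_ne_zero
      · exact sub_ne_zero_of_ne (H s hs.le t ht)
      · exact sub_ne_zero_of_ne (H (s + 1) (by omega) t ht)
    have step : ∀ t : ℕ, t < r → u z s(a + (s : ZMod n), c + (t : ZMod n)) = F (t + 1) / F t := by
      intro t ht
      rw [u_mk, hFdef]
      simp only
      rw [div4]
      have e1 : c + ((t : ZMod n)) + 1 = c + (((t + 1 : ℕ) : ZMod n)) := by push_cast; ring
      have e2 : a + ((s : ZMod n)) + 1 = a + (((s + 1 : ℕ) : ZMod n)) := by push_cast; ring
      rw [e1, e2]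
      ring
    calc ∏ t ∈ Finset.range r, u z s(a + (s : ZMod n), c + (t : ZMod n))
        = ∏ t ∈ Finset.range r, F (t + 1) / F t :=
          Finset.prod_congr rfl fun t ht => step t (Finset.mem_range.1 ht)
      _ = F r / F 0 := telescope F r hF
      _ = G (s + 1) / G s := by
          rw [hGdef, hFdef]
          simp only
          rw [div4, div4]
          push_cast
          ring
  rw [prod_cycInt a p hp]
  calc ∏ s ∈ Finset.range p, ∏ y ∈ cycInt c r, u z s(a + (s : ZMod n), y)
      = ∏ s ∈ Finset.range p, G (s + 1) / G s :=
        Finset.prod_congr rfl fun s hs => inner s (Finset.mem_range.1 hs)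
    _ = G p / G 0 := telescope G p hG
    _ = _ := by
        rw [hGdef]
        simp only
        rw [div4]
        push_cast
        ring

/-- For `n ≥ 4`, an injective `z : ZMod n → ℂ` and a cyclic 4-partition
`(A,B,C,D)` of `ZMod n`, the extended u-relation holds:
`∏_{x∈A, y∈C} u_{xy}(z) + ∏_{x∈B, y∈D} u_{xy}(z) = 1`. -/
theorem extended_u_relation (n : ℕ) [NeZero n] (hn : 4 ≤ n) (z : ZMod n → ℂ)
    (hz : Function.Injective z) (P : CyclicFourPartition n) :
    (∏ x ∈ P.A, ∏ y ∈ P.C, u z s(x, y)) + (∏ x ∈ P.B, ∏ y ∈ P.D, u z s(x, y)) = 1 := by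
  obtain ⟨a, p, q, r, t, hp, hq, hr, ht, hsum⟩ := P
  have H1 : ∀ s ≤ p, ∀ v ≤ r,
      z (a + (s : ZMod n)) ≠ z ((a + (p : ZMod n) + (q : ZMod n)) + (v : ZMod n)) := by
    intro s hs v hv heq
    have h2 := hz heq
    have h3 : ((s : ℕ) : ZMod n) = ((p + q + v : ℕ) : ZMod n) := by
      push_cast; linear_combination h2
    exact natCast_ne s (p + q + v) (by omega) (by omega) h3
  have H2 : ∀ s ≤ q, ∀ v ≤ t,
      z ((a + (p : ZMod n)) + (s : ZMod n))
        ≠ z ((a + (p : ZMod n) + (q : ZMod n) + (r : ZMod n)) + (v : ZMod n)) := by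
    intro s hs v hv heq
    have h2 := hz heq
    have h3 : ((p + s : ℕ) : ZMod n) = ((p + q + r + v : ℕ) : ZMod n) := by
      push_cast; linear_combination h2
    exact natCast_ne (p + s) (p + q + r + v) (by omega) (by omega) h3
  have PA := rect_prod z a (a + (p : ZMod n) + (q : ZMod n)) p r (by omega) (by omega) H1
  have PB := rect_prod z (a + (p : ZMod n)) (a + (p : ZMod n) + (q : ZMod n) + (r : ZMod n))
      q t (by omega) (by omega) H2
  have ewrap : a + (p : ZMod n) + (q : ZMod n) + (r : ZMod n) + (t : ZMod n) = a := by
    have h0 : ((p + q + r + t : ℕ) : ZMod n) = 0 := by rw [hsum, ZMod.natCast_self]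
    have : (p : ZMod n) + (q : ZMod n) + (r : ZMod n) + (t : ZMod n) = 0 := by
      push_cast at h0; linear_combination h0
    linear_combination this
  show (∏ x ∈ cycInt a p, ∏ y ∈ cycInt (a + (p : ZMod n) + (q : ZMod n)) r, u z s(x, y))
      + (∏ x ∈ cycInt (a + (p : ZMod n)) q,
          ∏ y ∈ cycInt (a + (p : ZMod n) + (q : ZMod n) + (r : ZMod n)) t, u z s(x, y)) = 1
  rw [PA, PB, ewrap]
  set w0 := z a
  set w1 := z (a + (p : ZMod n))
  set w2 := z (a + (p : ZMod n) + (q : ZMod n))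
  set w3 := z (a + (p : ZMod n) + (q : ZMod n) + (r : ZMod n))
  have h02 : w0 - w2 ≠ 0 := by
    apply sub_ne_zero_of_ne
    intro heq
    have h2 := hz heq
    have h3 : ((0 : ℕ) : ZMod n) = ((p + q : ℕ) : ZMod n) := by push_cast; linear_combination h2
    exact natCast_ne 0 (p + q) (by omega) (by omega) h3
  have h13 : w1 - w3 ≠ 0 := by
    apply sub_ne_zero_of_ne
    intro heq
    have h2 := hz heq
    have h3 : ((p : ℕ) : ZMod n) = ((p + q + r : ℕ) : ZMod n) := by
      push_cast; linear_combination h2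
    exact natCast_ne p (p + q + r) (by omega) (by omega) h3
  have h20 : w2 - w0 ≠ 0 := fun h => h02 (by linear_combination -h)
  field_simp
  ring

end M0n
end

section
/- Let n ≥ 4 be an integer. If u : E → ℂ has u(e) ≠ 0 for every chord e and satisfies every primitive u-relation, i.e. u({i,j}) + ∏_{e ∈ E, e crosses {i,j}} u(e) = 1 for every chord {i,j}, then there exists an injective map z : ZMod n → ℂ with u_e(z) = u(e) for every chord e ∈ E. -/
namespace M0n

section Dev
variable {n : ℕ} [NeZero n]
set_option linter.unusedSectionVars false

/-- transported `v` on natural indices -/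
noncomputable def vv (v : Sym2 (ZMod n) → ℂ) (i j : ℕ) : ℂ := v s((i : ZMod n), (j : ZMod n))

noncomputable def cc (v : Sym2 (ZMod n) → ℂ) (k : ℕ) : ℂ := ∏ l ∈ Finset.Ico 2 k, vv v 0 l

noncomputable def CC (v : Sym2 (ZMod n) → ℂ) (k : ℕ) : ℂ × ℂ :=
  if k % n = 1 then (1, 0) else if k % n = 0 then (0, 1) else (cc v (k % n), 1)

noncomputable def BB (v : Sym2 (ZMod n) → ℂ) (a b : ℕ) : ℂ :=
  (CC v a).1 * (CC v b).2 - (CC v b).1 * (CC v a).2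

noncomputable def RR (v : Sym2 (ZMod n) → ℂ) (i j : ℕ) : ℂ :=
  (BB v i (j + 1) * BB v (i + 1) j) / (BB v i j * BB v (i + 1) (j + 1))

/-- canonical chord predicate on naturals -/
def Ch (n : ℕ) (i j : ℕ) : Prop := i + 2 ≤ j ∧ j + 1 ≤ n ∧ ¬(i = 0 ∧ j + 1 = n)

variable {v : Sym2 (ZMod n) → ℂ}

lemma vv_symm (v : Sym2 (ZMod n) → ℂ) (a b : ℕ) : vv v a b = vv v b a := by
  unfold vv; rw [Sym2.eq_swap]

lemma vv_mod (v : Sym2 (ZMod n) → ℂ) (a b : ℕ) : vv v a (b % n) = vv v a b := by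
  unfold vv; rw [ZMod.natCast_mod]

lemma CC_mod (v : Sym2 (ZMod n) → ℂ) (k : ℕ) : CC v (k % n) = CC v k := by
  unfold CC; simp

lemma BB_mod (v : Sym2 (ZMod n) → ℂ) (a b : ℕ) : BB v (a % n) (b % n) = BB v a b := by
  unfold BB; rw [CC_mod, CC_mod]

lemma BB_symm (v : Sym2 (ZMod n) → ℂ) (a b : ℕ) : BB v a b = -BB v b a := by
  unfold BB; ring

lemma CC_per (v : Sym2 (ZMod n) → ℂ) (k : ℕ) : CC v (k + n) = CC v k := by
  rw [← CC_mod v (k+n), Nat.add_mod_right, CC_mod]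

lemma BB_per (v : Sym2 (ZMod n) → ℂ) (a b : ℕ) : BB v a (b + n) = BB v a b := by
  unfold BB; rw [CC_per]

lemma subval {a b : ℕ} (ha : a < n) (hb : b < n) :
    ((a : ZMod n) - (b : ZMod n)).val = if b ≤ a then a - b else a + n - b := by
  have h1 : (a : ZMod n) - b = ((a + (n - b) : ℕ) : ZMod n) := by
    push_cast [Nat.cast_sub hb.le]
    rw [ZMod.natCast_self]; ring
  rw [h1, ZMod.val_natCast]
  split_ifs with h
  · have : a + (n - b) = (a - b) + n := by omega
    rw [this, Nat.add_mod_right, Nat.mod_eq_of_lt (by omega)]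
  · rw [Nat.mod_eq_of_lt (by omega)]; omega

lemma cyc3 {a x b : ℕ} (ha : a < n) (hb : b < n) (hx : x < n) :
    CycBtw (a : ZMod n) (x : ZMod n) (b : ZMod n) ↔
      ((a < x ∧ x < b) ∨ (x < b ∧ b < a) ∨ (b < a ∧ a < x)) := by
  unfold CycBtw
  rw [subval hx ha, subval hb ha]
  split_ifs <;> omega

lemma RR_symm (v : Sym2 (ZMod n) → ℂ) (i j : ℕ) : RR v i j = RR v j i := by
  unfold RR
  rw [BB_symm v j (i+1), BB_symm v (j+1) i, BB_symm v j i, BB_symm v (j+1) (i+1)]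
  ring

lemma RR_per (v : Sym2 (ZMod n) → ℂ) (i j : ℕ) : RR v i (j + n) = RR v i j := by
  unfold RR
  rw [show j + n + 1 = (j+1) + n by omega, BB_per v i (j+1), BB_per v (i+1) j,
    BB_per v i j, BB_per v (i+1) (j+1)]

lemma RR_n (v : Sym2 (ZMod n) → ℂ) (i : ℕ) : RR v i n = RR v i 0 := by
  have h := RR_per v i 0
  rwa [Nat.zero_add] at h

lemma natCast_inj_iff {a b : ℕ} (ha : a < n) (hb : b < n) :
    ((a : ZMod n) = (b : ZMod n)) ↔ a = b := by
  rw [ZMod.natCast_eq_natCast_iff' a b n, Nat.mod_eq_of_lt ha, Nat.mod_eq_of_lt hb]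

lemma chMem {i j : ℕ} (h : Ch n i j) : s((i : ZMod n), (j : ZMod n)) ∈ chords n := by
  obtain ⟨h1, h2, h3⟩ := h
  have hi : i < n := by omega
  have hj : j < n := by omega
  have key : ∀ a b : ℕ, a < n → b < n → a + 2 ≤ b → ¬(a = 0 ∧ b + 1 = n) →
      (b : ZMod n) ≠ a - 1 ∧ (b : ZMod n) ≠ a ∧ (b : ZMod n) ≠ a + 1 := by
    intro a b ha hb hab hne
    refine ⟨?_, ?_, ?_⟩
    · intro hEq
      have : ((b + 1 : ℕ) : ZMod n) = (a : ZMod n) := by push_cast; rw [hEq]; ring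
      rw [ZMod.natCast_eq_natCast_iff'] at this
      rw [Nat.mod_eq_of_lt ha] at this
      rcases Nat.lt_or_ge (b+1) n with hlt | hge
      · rw [Nat.mod_eq_of_lt hlt] at this; omega
      · have hbn : b + 1 = n := by omega
        rw [hbn, Nat.mod_self] at this; omega
    · intro hEq
      rw [natCast_inj_iff hb ha] at hEq; omega
    · intro hEq
      have : ((b : ℕ) : ZMod n) = ((a + 1 : ℕ) : ZMod n) := by push_cast; rw [hEq]
      rw [natCast_inj_iff hb (by omega)] at this; omega
  simp only [chords, Finset.mem_filter, Finset.mem_univ, true_and]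
  intro x y hxy
  rw [Sym2.eq_iff] at hxy
  rcases hxy with ⟨rfl, rfl⟩ | ⟨rfl, rfl⟩
  · exact key i j hi hj h1 h3
  · -- reps swapped : need (i:ZMod n) ≠ j - 1 etc.
    have hibj : (i : ZMod n) ≠ (j : ZMod n) - 1 := by
      intro hEq
      have : ((i + 1 : ℕ) : ZMod n) = (j : ZMod n) := by push_cast; rw [hEq]; ring
      rw [natCast_inj_iff (by omega) hj] at this; omega
    have hij : (i : ZMod n) ≠ (j : ZMod n) := by
      intro hEq; rw [natCast_inj_iff hi hj] at hEq; omega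
    have hibj1 : (i : ZMod n) ≠ (j : ZMod n) + 1 := by
      intro hEq
      have : ((i : ℕ) : ZMod n) = ((j + 1 : ℕ) : ZMod n) := by push_cast; rw [hEq]
      rw [ZMod.natCast_eq_natCast_iff'] at this
      rw [Nat.mod_eq_of_lt hi] at this
      rcases Nat.lt_or_ge (j+1) n with hlt | hge
      · rw [Nat.mod_eq_of_lt hlt] at this; omega
      · have hjn : j + 1 = n := by omega
        rw [hjn, Nat.mod_self] at this; omega
    exact ⟨hibj, hij, hibj1⟩

lemma mem_ch {f : Sym2 (ZMod n)} (hf : f ∈ chords n) :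
    ∃ a b : ℕ, Ch n a b ∧ f = s((a : ZMod n), (b : ZMod n)) := by
  induction f using Sym2.ind with
  | _ x y =>
  simp only [chords, Finset.mem_filter, Finset.mem_univ, true_and] at hf
  obtain ⟨hne1, hne2, hne3⟩ := hf x y rfl
  -- set a b as vals
  have hx : x = ((x.val : ℕ) : ZMod n) := (ZMod.natCast_rightInverse x).symm
  have hy : y = ((y.val : ℕ) : ZMod n) := (ZMod.natCast_rightInverse y).symm
  have hxl := ZMod.val_lt x
  have hyl := ZMod.val_lt y
  have hne2' : x.val ≠ y.val := fun h => hne2 (by rw [hx, hy, h])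
  -- adjacency facts in terms of vals
  have adj1 : ¬ (y.val + 1) % n = x.val % n := by
    intro h
    apply hne1
    have h2 : ((y.val + 1 : ℕ) : ZMod n) = ((x.val : ℕ) : ZMod n) := by
      rw [ZMod.natCast_eq_natCast_iff']; exact h
    push_cast at h2
    rw [hy, hx, ← h2]; ring
  have adj2 : ¬ (x.val + 1) % n = y.val % n := by
    intro h
    apply hne3
    have h2 : ((x.val + 1 : ℕ) : ZMod n) = ((y.val : ℕ) : ZMod n) := by
      rw [ZMod.natCast_eq_natCast_iff']; exact h
    push_cast at h2
    rw [hy, hx, ← h2]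
  rcases Nat.lt_or_ge x.val y.val with hlt | hge
  · refine ⟨x.val, y.val, ⟨?_, by omega, ?_⟩, by rw [← hx, ← hy]⟩
    · -- x.val + 2 ≤ y.val
      rcases Nat.lt_or_ge (x.val + 1) n with h1 | h1
      · have := adj2; rw [Nat.mod_eq_of_lt h1, Nat.mod_eq_of_lt hyl] at this; omega
      · omega
    · rintro ⟨h0, hn1⟩
      apply adj1
      rw [hn1, Nat.mod_self, h0, Nat.zero_mod]
  · have hlt : y.val < x.val := by omega
    refine ⟨y.val, x.val, ⟨?_, by omega, ?_⟩, by rw [← hx, ← hy, Sym2.eq_swap]⟩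
    · rcases Nat.lt_or_ge (y.val + 1) n with h1 | h1
      · have := adj1; rw [Nat.mod_eq_of_lt h1, Nat.mod_eq_of_lt hxl] at this; omega
      · omega
    · rintro ⟨h0, hn1⟩
      apply adj2
      rw [hn1, Nat.mod_self, h0, Nat.zero_mod]
lemma cast_eq_of_mod {a b : ℕ} (h : a % n = b % n) : ((a : ℕ) : ZMod n) = ((b : ℕ) : ZMod n) := by
  rw [ZMod.natCast_eq_natCast_iff']; exact h

lemma crossEq {i j : ℕ} (hch : Ch n i j) :
    (chords n).filter (fun f => Crosses n f s((i : ZMod n), (j : ZMod n))) =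
      ((Finset.Ico (i+1) j) ×ˢ (Finset.Ico (j+1) (n+i))).image
        (fun p : ℕ × ℕ => s((p.1 : ZMod n), (p.2 : ZMod n))) := by
  obtain ⟨hij, hjn, hni⟩ := hch
  have hi : i < n := by omega
  have hj : j < n := by omega
  ext f
  simp only [Finset.mem_filter, Finset.mem_image, Finset.mem_product, Finset.mem_Ico]
  constructor
  · rintro ⟨hf, hcr⟩
    obtain ⟨a, b, ⟨hab, hbn, hab0⟩, rfl⟩ := mem_ch hf
    have ha' : a < n := by omega
    have hb' : b < n := by omega
    have X1 := hcr (a : ZMod n) (b : ZMod n) (i : ZMod n) (j : ZMod n) rfl rfl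
    have X2 := hcr (b : ZMod n) (a : ZMod n) (i : ZMod n) (j : ZMod n) Sym2.eq_swap rfl
    rw [cyc3 ha' hb' hi, cyc3 ha' hb' hj] at X1
    rw [cyc3 hb' ha' hi, cyc3 hb' ha' hj] at X2
    simp only [Xor', Xor] at X1 X2
    have key : (i < a ∧ a < j ∧ (j < b ∨ b < i)) ∨ (i < b ∧ b < j ∧ (j < a ∨ a < i)) := by
      omega
    rcases key with ⟨h1, h2, h3⟩ | ⟨h1, h2, h3⟩
    · rcases h3 with h3 | h3
      · exact ⟨(a, b), ⟨⟨by omega, by omega⟩, by omega, by omega⟩, rfl⟩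
      · refine ⟨(a, b + n), ⟨⟨by omega, by omega⟩, by omega, by omega⟩, ?_⟩
        have : ((b + n : ℕ) : ZMod n) = ((b : ℕ) : ZMod n) :=
          cast_eq_of_mod (by rw [Nat.add_mod_right])
        rw [this]
    · rcases h3 with h3 | h3
      · exact ⟨(b, a), ⟨⟨by omega, by omega⟩, by omega, by omega⟩, Sym2.eq_swap⟩
      · refine ⟨(b, a + n), ⟨⟨by omega, by omega⟩, by omega, by omega⟩, ?_⟩
        have : ((a + n : ℕ) : ZMod n) = ((a : ℕ) : ZMod n) :=
          cast_eq_of_mod (by rw [Nat.add_mod_right])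
        rw [this, Sym2.eq_swap]
  · rintro ⟨⟨k, l⟩, ⟨⟨hk1', hk2'⟩, hl1', hl2'⟩, rfl⟩
    have hk1 : i + 1 ≤ k := hk1'
    have hk2 : k < j := hk2'
    have hl1 : j + 1 ≤ l := hl1'
    have hl2 : l < n + i := hl2'
    have hkn : k < n := by omega
    have hl' : (l % n = l ∧ l < n) ∨ (l % n = l - n ∧ n ≤ l ∧ l - n < i) := by
      rcases Nat.lt_or_ge l n with h | h
      · exact Or.inl ⟨Nat.mod_eq_of_lt h, h⟩
      · refine Or.inr ⟨?_, h, by omega⟩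
        rw [Nat.mod_eq_sub_mod h, Nat.mod_eq_of_lt (by omega)]
    have hlmod : l % n < n := Nat.mod_lt _ (by omega)
    have hlcast : ((l : ℕ) : ZMod n) = ((l % n : ℕ) : ZMod n) :=
      cast_eq_of_mod (by rw [Nat.mod_mod_of_dvd _ dvd_rfl])
    constructor
    · -- chord membership
      rcases hl' with ⟨hm, hln⟩ | ⟨hm, hln, hli⟩
      · exact chMem ⟨by omega, by omega, by omega⟩
      · have : s((k : ZMod n), (l : ZMod n)) = s(((l - n : ℕ) : ZMod n), (k : ZMod n)) := by
          rw [hlcast, hm, Sym2.eq_swap]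
        rw [this]
        exact chMem ⟨by omega, by omega, by omega⟩
    · -- Crosses
      intro I J K L hIJ hKL
      rw [hlcast] at hIJ
      rw [Sym2.eq_iff] at hIJ hKL
      rcases hIJ with ⟨rfl, rfl⟩ | ⟨rfl, rfl⟩ <;> rcases hKL with ⟨rfl, rfl⟩ | ⟨rfl, rfl⟩ <;>
        simp only [Xor', Xor, cyc3 hkn hlmod hi, cyc3 hkn hlmod hj,
          cyc3 hlmod hkn hi, cyc3 hlmod hkn hj] <;> omega

lemma rectInj {i j : ℕ} (hch : Ch n i j) :
    ∀ p ∈ (Finset.Ico (i+1) j) ×ˢ (Finset.Ico (j+1) (n+i)),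
    ∀ q ∈ (Finset.Ico (i+1) j) ×ˢ (Finset.Ico (j+1) (n+i)),
      (s((p.1 : ZMod n), (p.2 : ZMod n)) : Sym2 (ZMod n)) = s((q.1 : ZMod n), (q.2 : ZMod n)) →
      p = q := by
  obtain ⟨hij, hjn, hni⟩ := hch
  rintro ⟨k, l⟩ hp ⟨k', l'⟩ hq hEq
  simp only [Finset.mem_product, Finset.mem_Ico] at hp hq
  have hk1 : i + 1 ≤ k := hp.1.1
  have hk2 : k < j := hp.1.2
  have hl1 : j + 1 ≤ l := hp.2.1
  have hl2 : l < n + i := hp.2.2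
  have hk1' : i + 1 ≤ k' := hq.1.1
  have hk2' : k' < j := hq.1.2
  have hl1' : j + 1 ≤ l' := hq.2.1
  have hl2' : l' < n + i := hq.2.2
  have hlm : l % n = l ∨ (l % n = l - n ∧ n ≤ l) := by
    rcases Nat.lt_or_ge l n with h | h
    · exact Or.inl (Nat.mod_eq_of_lt h)
    · exact Or.inr ⟨by rw [Nat.mod_eq_sub_mod h, Nat.mod_eq_of_lt (by omega)], h⟩
  have hlm' : l' % n = l' ∨ (l' % n = l' - n ∧ n ≤ l') := by
    rcases Nat.lt_or_ge l' n with h | h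
    · exact Or.inl (Nat.mod_eq_of_lt h)
    · exact Or.inr ⟨by rw [Nat.mod_eq_sub_mod h, Nat.mod_eq_of_lt (by omega)], h⟩
  have hkm : k % n = k := Nat.mod_eq_of_lt (by omega)
  have hkm' : k' % n = k' := Nat.mod_eq_of_lt (by omega)
  have hEq' : (s((k : ZMod n), (l : ZMod n)) : Sym2 (ZMod n))
      = s((k' : ZMod n), (l' : ZMod n)) := hEq
  rw [Sym2.eq_iff] at hEq'
  simp only [Prod.mk.injEq]
  rcases hEq' with ⟨e1, e2⟩ | ⟨e1, e2⟩ <;>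
    rw [ZMod.natCast_eq_natCast_iff'] at e1 e2 <;> omega
lemma prim {i j : ℕ}
    (hrel : ∀ e ∈ chords n, v e + ∏ f ∈ (chords n).filter (fun f => Crosses n f e), v f = 1)
    (hch : Ch n i j) :
    1 - vv v i j = ∏ k ∈ Finset.Ico (i+1) j, ∏ l ∈ Finset.Ico (j+1) (n+i), vv v k l := by
  have h := hrel _ (chMem hch)
  rw [crossEq hch, Finset.prod_image (rectInj hch)] at h
  unfold vv
  rw [← Finset.prod_product']
  linear_combination -h

lemma rectChordMem {i j k l : ℕ} (hch : Ch n i j)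
    (hk : k ∈ Finset.Ico (i+1) j) (hl : l ∈ Finset.Ico (j+1) (n+i)) :
    s((k : ZMod n), (l : ZMod n)) ∈ chords n := by
  have h : s((k : ZMod n), (l : ZMod n)) ∈
      (chords n).filter (fun f => Crosses n f s((i : ZMod n), (j : ZMod n))) := by
    rw [crossEq hch]
    exact Finset.mem_image.mpr ⟨(k, l), Finset.mem_product.mpr ⟨hk, hl⟩, rfl⟩
  exact (Finset.mem_filter.mp h).1

lemma vv_ne_zero {i j : ℕ} (hv0 : ∀ e ∈ chords n, v e ≠ 0) (hch : Ch n i j) :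
    vv v i j ≠ 0 := hv0 _ (chMem hch)

lemma one_sub_vv_ne {i j : ℕ} (hv0 : ∀ e ∈ chords n, v e ≠ 0)
    (hrel : ∀ e ∈ chords n, v e + ∏ f ∈ (chords n).filter (fun f => Crosses n f e), v f = 1)
    (hch : Ch n i j) : 1 - vv v i j ≠ 0 := by
  rw [prim hrel hch]
  apply Finset.prod_ne_zero_iff.mpr
  intro k hk
  apply Finset.prod_ne_zero_iff.mpr
  intro l hl
  exact hv0 _ (rectChordMem hch hk hl)

lemma cc_ne_zero {k : ℕ} (hn : 4 ≤ n) (hv0 : ∀ e ∈ chords n, v e ≠ 0) (hk : k ≤ n - 1) :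
    cc v k ≠ 0 := by
  apply Finset.prod_ne_zero_iff.mpr
  intro l hl
  rw [Finset.mem_Ico] at hl
  exact vv_ne_zero hv0 ⟨by omega, by omega, by omega⟩

lemma cc_succ {k : ℕ} (hk : 2 ≤ k) : cc v (k + 1) = cc v k * vv v 0 k :=
  Finset.prod_Ico_succ_top hk _

lemma CC0 (hn : 4 ≤ n) : CC v 0 = ((0 : ℂ), (1 : ℂ)) := by
  unfold CC; rw [Nat.zero_mod]; norm_num

lemma CC1 (hn : 4 ≤ n) : CC v 1 = ((1 : ℂ), (0 : ℂ)) := by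
  unfold CC; rw [Nat.mod_eq_of_lt (by omega)]; norm_num

lemma CCk {k : ℕ} (hk : 2 ≤ k) (hk' : k < n) : CC v k = (cc v k, 1) := by
  unfold CC; rw [Nat.mod_eq_of_lt hk']
  rw [if_neg (by omega), if_neg (by omega)]

lemma CCn (hn : 4 ≤ n) : CC v n = ((0 : ℂ), (1 : ℂ)) := by
  unfold CC; rw [Nat.mod_self]; norm_num

lemma B0q (hn : 4 ≤ n) {q : ℕ} (hq : 2 ≤ q) (hq' : q < n) : BB v 0 q = -cc v q := by
  unfold BB; rw [CC0 hn, CCk hq hq']; ring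

lemma B01 (hn : 4 ≤ n) : BB v 0 1 = -1 := by
  unfold BB; rw [CC0 hn, CC1 hn]; ring

lemma B1q (hn : 4 ≤ n) {q : ℕ} (hq : 2 ≤ q) (hq' : q < n) : BB v 1 q = 1 := by
  unfold BB; rw [CC1 hn, CCk hq hq']; ring

lemma B1n (hn : 4 ≤ n) : BB v 1 n = 1 := by
  unfold BB; rw [CC1 hn, CCn hn]; ring

lemma Bpn (hn : 4 ≤ n) {p : ℕ} (hp : 2 ≤ p) (hp' : p < n) : BB v p n = cc v p := by
  unfold BB; rw [CCn hn, CCk hp hp']; ring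

lemma Badj (hn : 4 ≤ n) {k : ℕ} (hk : 2 ≤ k) (hk' : k + 1 < n) :
    BB v k (k+1) = cc v k * (1 - vv v 0 k) := by
  unfold BB; rw [CCk hk (by omega), CCk (by omega) hk', cc_succ hk]; ring

lemma cc_two : cc v 2 = 1 := by
  unfold cc; rw [Finset.Ico_self, Finset.prod_empty]

lemma B2q (hn : 4 ≤ n) {q : ℕ} (hq : 3 ≤ q) (hq' : q < n) : BB v 2 q = 1 - cc v q := by
  unfold BB; rw [CCk (by omega) (by omega), CCk (by omega) hq', cc_two]; ring

lemma bEst {a b : ℕ} (hEst : vv v a b = RR v a b) (hne : vv v a b ≠ 0) :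
    BB v a (b+1) ≠ 0 ∧ BB v (a+1) b ≠ 0 := by
  rw [hEst] at hne
  unfold RR at hne
  rw [div_ne_zero_iff] at hne
  exact mul_ne_zero_iff.mp hne.1

lemma bNe (hn : 4 ≤ n) (hv0 : ∀ e ∈ chords n, v e ≠ 0)
    (hrel : ∀ e ∈ chords n, v e + ∏ f ∈ (chords n).filter (fun f => Crosses n f e), v f = 1)
    (r jj : ℕ) (hr : 1 ≤ r)
    (h1 : ∀ r' j', r' < r → Ch n r' j' → vv v r' j' = RR v r' j')
    (h2 : ∀ j', jj < j' → Ch n r j' → vv v r j' = RR v r j') :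
    ∀ p q, q ≤ n → p < q → ¬(p = 0 ∧ q = n) →
      (p ≤ r ∨ (p = r + 1 ∧ jj + 1 ≤ q)) → BB v p q ≠ 0 := by
  intro p q hqn hpq hp0 hpr
  rcases Nat.eq_or_lt_of_le hqn with rfl | hq'
  · -- q = n
    rcases Nat.lt_or_ge p 2 with hp2 | hp2
    · have hp1 : p = 1 := by omega
      rw [hp1, B1n hn]; exact one_ne_zero
    · rw [Bpn hn hp2 hpq]; exact cc_ne_zero hn hv0 (by omega)
  · -- q < n
    rcases Nat.lt_or_ge p 2 with hp2 | hp2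
    · rcases Nat.eq_or_lt_of_le (Nat.le_of_lt_succ (by omega) : p ≤ 1) with hp1 | hp0'
      · -- p = 1
        rw [hp1, B1q hn (by omega) hq']; exact one_ne_zero
      · -- p = 0
        have hp00 : p = 0 := by omega
        rcases Nat.eq_or_lt_of_le hpq with h | h
        · rw [hp00, ← h, hp00, B01 hn]; norm_num
        · rw [hp00, B0q hn (by omega) hq']
          simp only [neg_ne_zero]
          exact cc_ne_zero hn hv0 (by omega)
    · -- 2 ≤ p
      rcases Nat.eq_or_lt_of_le hpq with h | h
      · -- q = p + 1
        have hq : q = p + 1 := by omega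
        rw [hq, Badj hn hp2 (by omega)]
        exact mul_ne_zero (cc_ne_zero hn hv0 (by omega))
          (one_sub_vv_ne hv0 hrel ⟨by omega, by omega, by omega⟩)
      · -- q ≥ p + 2
        have hq2 : p + 2 ≤ q := by omega
        have hEst : vv v (p-1) q = RR v (p-1) q := by
          rcases hpr with hpr | ⟨rfl, hjq⟩
          · exact h1 (p-1) q (by omega) ⟨by omega, by omega, by omega⟩
          · have : r + 1 - 1 = r := by omega
            rw [this]
            exact h2 q (by omega) ⟨by omega, by omega, by omega⟩
        have hne := vv_ne_zero hv0 (⟨by omega, by omega, by omega⟩ : Ch n (p-1) q)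
        have := (bEst hEst hne).2
        rwa [show p - 1 + 1 = p by omega] at this

lemma teles (m a : ℕ) : ∀ b, a ≤ b →
    (∀ l, a ≤ l → l ≤ b → BB v m l ≠ 0 ∧ BB v (m+1) l ≠ 0) →
    ∏ l ∈ Finset.Ico a b, RR v m l =
      (BB v m b * BB v (m+1) a) / (BB v m a * BB v (m+1) b) := by
  intro b hab
  induction b, hab using Nat.le_induction with
  | base =>
    intro h
    rw [Finset.Ico_self, Finset.prod_empty]
    rw [div_self]
    exact mul_ne_zero (h a le_rfl le_rfl).1 (h a le_rfl le_rfl).2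
  | succ b hab IH =>
    intro h
    rw [Finset.prod_Ico_succ_top hab, IH (fun l h1 h2 => h l h1 (by omega))]
    unfold RR
    have h1 := (h a le_rfl (by omega)).1
    have h2 := (h a le_rfl (by omega)).2
    have h3 := (h b (by omega) (by omega)).1
    have h4 := (h b (by omega) (by omega)).2
    have h5 := (h (b+1) (by omega) le_rfl).2
    field_simp

lemma key_identity (A B C D E : ℂ × ℂ)
    (h1 : B.1*D.2 - D.1*B.2 ≠ 0) (h2 : C.1*E.2 - E.1*C.2 ≠ 0)
    (h3 : B.1*E.2 - E.1*B.2 ≠ 0) (h4 : C.1*A.2 - A.1*C.2 ≠ 0)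
    (h5 : A.1*D.2 - D.1*A.2 ≠ 0) (h6 : A.1*C.2 - C.1*A.2 ≠ 0) :
    (1 - ((B.1*E.2 - E.1*B.2) * (C.1*D.2 - D.1*C.2)) /
        ((B.1*D.2 - D.1*B.2) * (C.1*E.2 - E.1*C.2))) *
      (((B.1*A.2 - A.1*B.2) * (C.1*E.2 - E.1*C.2)) /
        ((B.1*E.2 - E.1*B.2) * (C.1*A.2 - A.1*C.2)))
    = (1 - ((A.1*E.2 - E.1*A.2) * (B.1*D.2 - D.1*B.2)) /
        ((A.1*D.2 - D.1*A.2) * (B.1*E.2 - E.1*B.2))) *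
      (((A.1*D.2 - D.1*A.2) * (B.1*C.2 - C.1*B.2)) /
        ((A.1*C.2 - C.1*A.2) * (B.1*D.2 - D.1*B.2))) := by
  rw [one_sub_div (mul_ne_zero h1 h2), one_sub_div (mul_ne_zero h5 h3), div_mul_div_comm,
    div_mul_div_comm, div_eq_div_iff (mul_ne_zero (mul_ne_zero h1 h2) (mul_ne_zero h3 h4))
    (mul_ne_zero (mul_ne_zero h5 h3) (mul_ne_zero h6 h1))]
  ring

theorem master (hn : 4 ≤ n) (hv0 : ∀ e ∈ chords n, v e ≠ 0)
    (hrel : ∀ e ∈ chords n, v e + ∏ f ∈ (chords n).filter (fun f => Crosses n f e), v f = 1) :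
    ∀ r j, Ch n r j → vv v r j = RR v r j := by
  intro r
  induction r using Nat.strong_induction_on with
  | _ r IH =>
  match r with
  | 0 =>
    intro j hch
    obtain ⟨hij, hjn, hni⟩ := hch
    have hj2 : 2 ≤ j := by omega
    have hjn' : j + 1 < n := by omega
    have hc := cc_ne_zero hn hv0 (show j ≤ n - 1 by omega)
    unfold RR
    rw [B0q hn (by omega) (by omega), B1q hn (by omega) (by omega),
      B0q hn (by omega) (by omega), B1q hn (by omega) (by omega),
      cc_succ (by omega)]
    field_simp
  | (r' + 1) =>
    intro j₀ hch₀
    -- inner downward induction on j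
    have inner : ∀ m j, n - j ≤ m → Ch n (r'+1) j → vv v (r'+1) j = RR v (r'+1) j := by
      intro m
      induction m with
      | zero => intro j hm hch; exact absurd hch.2.1 (by omega)
      | succ m IHm =>
        intro j hm hch
        obtain ⟨hij, hjn, hni⟩ := hch
        have h1 : ∀ r'' j'', r'' < r' + 1 → Ch n r'' j'' → vv v r'' j'' = RR v r'' j'' :=
          fun r'' j'' hlt hc => IH r'' hlt j'' hc
        by_cases hsp : r' = 0 ∧ j + 1 = n
        · -- base case : chord (1, n-1)
          obtain ⟨hr0, hjn1⟩ := hsp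
          subst hr0
          have h2 : ∀ j', j < j' → Ch n 1 j' → vv v 1 j' = RR v 1 j' :=
            fun j' hj' hc => absurd hc.2.1 (by omega)
          have hB := bNe hn hv0 hrel 1 j le_rfl h1 h2
          have P1 := prim hrel (⟨by omega, by omega, by omega⟩ : Ch n 1 j)
          rw [show n + 1 = j + 1 + 1 by omega] at P1
          have hsing : ∀ k, ∏ l ∈ Finset.Ico (j+1) (j+1+1), vv v k l = vv v k (j+1) := by
            intro k
            rw [Finset.prod_Ico_succ_top le_rfl, Finset.Ico_self, Finset.prod_empty, one_mul]
          rw [Finset.prod_congr rfl (fun k _ => hsing k)] at P1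
          have hpt : ∀ k ∈ Finset.Ico 2 j, vv v k (j+1) = RR v 0 k := by
            intro k hk
            rw [Finset.mem_Ico] at hk
            have e1 : vv v k (j+1) = vv v k 0 := by
              unfold vv
              rw [hjn1, ZMod.natCast_self, show ((0:ℕ) : ZMod n) = 0 by norm_num]
            rw [e1, vv_symm]
            exact h1 0 k (by omega) ⟨by omega, by omega, by omega⟩
          rw [Finset.prod_congr rfl hpt] at P1
          rw [teles 0 2 j (by omega) (fun l hl1 hl2 =>
            ⟨hB 0 l (by omega) (by omega) (by omega) (by omega),
             hB 1 l (by omega) (by omega) (by omega) (by omega)⟩)] at P1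
          rw [B0q hn (by omega) (by omega), B0q hn (by omega) (by omega),
            B1q hn (by omega) (by omega), B1q hn (by omega) (by omega), cc_two] at P1
          -- P1 : 1 - vv v 1 j = (-cc v j * 1) / (-1 * 1)
          have hval : vv v 1 j = 1 - cc v j := by linear_combination -P1
          unfold RR
          rw [show j + 1 = n by omega, B1n hn, Bpn hn (by omega) (by omega),
            B1q hn (by omega) (by omega), B2q hn (by omega) (by omega), cc_two, hval]
          field_simp
        · -- general step
          have hstep : Ch n r' j := ⟨by omega, by omega, by omega⟩
          have h2 : ∀ j', j < j' → Ch n (r'+1) j' → vv v (r'+1) j' = RR v (r'+1) j' :=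
            fun j' hj' hc => IHm j' (by omega) hc
          have hB := bNe hn hv0 hrel (r'+1) j (by omega) h1 h2
          have P1 := prim hrel (⟨by omega, by omega, by omega⟩ : Ch n (r'+1) j)
          have P2 := prim hrel hstep
          rw [show n + (r'+1) = (n + r') + 1 by omega] at P1
          have hsplit : ∀ k, ∏ l ∈ Finset.Ico (j+1) ((n+r')+1), vv v k l
              = (∏ l ∈ Finset.Ico (j+1) (n+r'), vv v k l) * vv v k (n+r') :=
            fun k => Finset.prod_Ico_succ_top (by omega) _
          rw [Finset.prod_congr rfl (fun k _ => hsplit k), Finset.prod_mul_distrib] at P1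
          rw [← Finset.insert_Ico_add_one_left_eq_Ico (show r'+1 < j by omega),
            Finset.prod_insert (by simp)] at P2
          have EX : (1 - vv v (r'+1) j) * (∏ l ∈ Finset.Ico (j+1) (n+r'), vv v (r'+1) l)
              = (1 - vv v r' j) * (∏ k ∈ Finset.Ico (r'+1+1) j, vv v k (n+r')) := by
            rw [P1, P2]; ring
          have hK : ∀ k ∈ Finset.Ico (r'+1+1) j, vv v k (n+r') = RR v r' k := by
            intro k hk
            rw [Finset.mem_Ico] at hk
            have e1 : vv v k (n+r') = vv v k r' := by
              rw [← vv_mod v k (n+r'), show n + r' = r' + n by omega,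
                Nat.add_mod_right, Nat.mod_eq_of_lt (by omega)]
            rw [e1, vv_symm]
            exact h1 r' k (by omega) ⟨by omega, by omega, by omega⟩
          have hL : ∀ l ∈ Finset.Ico (j+1) (n+r'), vv v (r'+1) l = RR v (r'+1) l := by
            intro l hl
            rw [Finset.mem_Ico] at hl
            rcases lt_trichotomy l n with hln | hln | hln
            · exact h2 l (by omega) ⟨by omega, by omega, by omega⟩
            · have hr1 : 1 ≤ r' := by omega
              have e1 : vv v (r'+1) l = vv v 0 (r'+1) := by
                unfold vv
                rw [hln, ZMod.natCast_self, Sym2.eq_swap]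
                norm_num
              have e2 : RR v (r'+1) l = RR v 0 (r'+1) := by
                rw [hln, RR_n, RR_symm]
              rw [e1, e2]
              exact h1 0 (r'+1) (by omega) ⟨by omega, by omega, by omega⟩
            · have hd1 : 1 ≤ l - n := by omega
              have hd2 : l - n < r' := by omega
              have e1 : vv v (r'+1) l = vv v (l-n) (r'+1) := by
                rw [← vv_mod v (r'+1) l, Nat.mod_eq_sub_mod (by omega),
                  Nat.mod_eq_of_lt (by omega), vv_symm]
              have e2 : RR v (r'+1) l = RR v (l-n) (r'+1) := by
                conv_lhs => rw [show l = (l-n) + n by omega]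
                rw [RR_per, RR_symm]
              rw [e1, e2]
              exact h1 (l-n) (r'+1) (by omega) ⟨by omega, by omega, by omega⟩
          rw [Finset.prod_congr rfl hK, Finset.prod_congr rfl hL,
            h1 r' j (by omega) hstep] at EX
          rw [teles r' (r'+1+1) j (by omega) (fun l hl1 hl2 =>
              ⟨hB r' l (by omega) (by omega) (by omega) (by omega),
               hB (r'+1) l (by omega) (by omega) (by omega) (by omega)⟩)] at EX
          have hypL : ∀ l, j+1 ≤ l → l ≤ n+r' → BB v (r'+1) l ≠ 0 ∧ BB v (r'+1+1) l ≠ 0 := by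
            intro l hl1 hl2
            rcases lt_trichotomy l n with hln | hln | hln
            · exact ⟨hB (r'+1) l (by omega) (by omega) (by omega) (by omega),
                hB (r'+1+1) l (by omega) (by omega) (by omega) (Or.inr ⟨rfl, by omega⟩)⟩
            · subst hln
              exact ⟨hB (r'+1) l (by omega) (by omega) (by omega) (by omega),
                hB (r'+1+1) l (by omega) (by omega) (by omega) (Or.inr ⟨rfl, by omega⟩)⟩
            · have hd1 : 1 ≤ l - n := by omega
              have hd2 : l - n ≤ r' := by omega
              constructor
              · rw [show l = (l-n) + n by omega, BB_per, BB_symm]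
                exact neg_ne_zero.mpr (hB (l-n) (r'+1) (by omega) (by omega) (by omega) (by omega))
              · rw [show l = (l-n) + n by omega, BB_per, BB_symm]
                exact neg_ne_zero.mpr (hB (l-n) (r'+1+1) (by omega) (by omega) (by omega) (by omega))
          rw [teles (r'+1) (j+1) (n+r') (by omega) hypL] at EX
          rw [show n + r' = r' + n by omega, BB_per v (r'+1) r', BB_per v (r'+1+1) r'] at EX
          have hBA : BB v (r'+1) r' ≠ 0 := by
            rw [BB_symm]
            exact neg_ne_zero.mpr (hB r' (r'+1) (by omega) (by omega) (by omega) (by omega))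
          have h4' : BB v (r'+1+1) r' ≠ 0 := by
            rw [BB_symm]
            exact neg_ne_zero.mpr (hB r' (r'+1+1) (by omega) (by omega) (by omega) (by omega))
          have h2' : BB v (r'+1+1) (j+1) ≠ 0 :=
            hB (r'+1+1) (j+1) (by omega) (by omega) (by omega) (Or.inr ⟨rfl, by omega⟩)
          have h3' : BB v (r'+1) (j+1) ≠ 0 :=
            hB (r'+1) (j+1) (by omega) (by omega) (by omega) (by omega)
          have h1' : BB v (r'+1) j ≠ 0 :=
            hB (r'+1) j (by omega) (by omega) (by omega) (by omega)
          have h5' : BB v r' j ≠ 0 :=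
            hB r' j (by omega) (by omega) (by omega) (by omega)
          have h6' : BB v r' (r'+1+1) ≠ 0 :=
            hB r' (r'+1+1) (by omega) (by omega) (by omega) (by omega)
          have key : (1 - RR v (r'+1) j) *
                (BB v (r'+1) r' * BB v (r'+1+1) (j+1) / (BB v (r'+1) (j+1) * BB v (r'+1+1) r'))
              = (1 - RR v r' j) *
                (BB v r' j * BB v (r'+1) (r'+1+1) / (BB v r' (r'+1+1) * BB v (r'+1) j)) :=
            key_identity (CC v r') (CC v (r'+1)) (CC v (r'+1+1)) (CC v j) (CC v (j+1))
              h1' h2' h3' h4' h5' h6'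
          have hT1ne : (BB v (r'+1) r' * BB v (r'+1+1) (j+1)) /
              (BB v (r'+1) (j+1) * BB v (r'+1+1) r') ≠ 0 :=
            div_ne_zero (mul_ne_zero hBA h2') (mul_ne_zero h3' h4')
          have hfin := mul_right_cancel₀ hT1ne (EX.trans key.symm)
          linear_combination -hfin
    exact inner n j₀ (by omega) hch₀

lemma Bn_per (v : Sym2 (ZMod n) → ℂ) (p : ℕ) : BB v p n = BB v p 0 := by
  have h := BB_per v p 0
  rwa [Nat.zero_add] at h

lemma ball (hn : 4 ≤ n) (hv0 : ∀ e ∈ chords n, v e ≠ 0)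
    (hrel : ∀ e ∈ chords n, v e + ∏ f ∈ (chords n).filter (fun f => Crosses n f e), v f = 1) :
    ∀ a b : ℕ, a < n → b < n → a ≠ b → BB v a b ≠ 0 := by
  have hB := bNe hn hv0 hrel n 0 (by omega)
    (fun r' j' _ hc => master hn hv0 hrel r' j' hc)
    (fun j' _ hc => absurd hc (by rintro ⟨h1, h2, h3⟩; omega))
  have key : ∀ a b : ℕ, a < n → b < n → a < b → BB v a b ≠ 0 := by
    intro a b ha hb hab
    exact hB a b (by omega) (by omega) (by omega) (by omega)
  intro a b ha hb hne
  rcases Nat.lt_or_ge a b with h | h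
  · exact key a b ha hb h
  · rw [BB_symm]
    exact neg_ne_zero.mpr (key b a hb ha (by omega))

theorem realize (hn : 4 ≤ n) (hv0 : ∀ e ∈ chords n, v e ≠ 0)
    (hrel : ∀ e ∈ chords n, v e + ∏ f ∈ (chords n).filter (fun f => Crosses n f e), v f = 1) :
    ∃ z : ZMod n → ℂ, Function.Injective z ∧ ∀ e ∈ chords n, u z e = v e := by
  have npos : 0 < n := by omega
  have hball := ball hn hv0 hrel
  obtain ⟨E, hE⟩ : ∃ E : ℂ, ∀ k, k < n → E * (CC v k).1 + (CC v k).2 ≠ 0 := by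
    obtain ⟨E, hE⟩ := Infinite.exists_notMem_finset
      ((Finset.range n).image (fun k => -(CC v k).2 / (CC v k).1))
    refine ⟨E, fun k hk hzero => ?_⟩
    by_cases hc1 : (CC v k).1 = 0
    · have h2 : (CC v k).2 = 1 ∨ (CC v k).1 = 1 := by
        unfold CC; split_ifs <;> simp
      rcases h2 with h2 | h2
      · rw [hc1, h2, mul_zero, zero_add] at hzero
        exact one_ne_zero hzero
      · rw [hc1] at h2
        exact one_ne_zero h2.symm
    · apply hE
      refine Finset.mem_image.mpr ⟨k, Finset.mem_range.mpr hk, ?_⟩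
      field_simp
      linear_combination -hzero
  have hD : ∀ a : ℕ, E * (CC v a).1 + (CC v a).2 ≠ 0 := by
    intro a
    have h := hE (a % n) (Nat.mod_lt _ npos)
    rwa [CC_mod] at h
  set z : ZMod n → ℂ :=
    fun x => (CC v x.val).1 / (E * (CC v x.val).1 + (CC v x.val).2) with hzdef
  have hz : ∀ a : ℕ, z ((a : ℕ) : ZMod n)
      = (CC v a).1 / (E * (CC v a).1 + (CC v a).2) := by
    intro a
    rw [hzdef]
    simp only [ZMod.val_natCast, CC_mod]
  have hsub : ∀ a b : ℕ, (CC v a).1 / (E * (CC v a).1 + (CC v a).2)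
      - (CC v b).1 / (E * (CC v b).1 + (CC v b).2)
      = BB v a b / ((E * (CC v a).1 + (CC v a).2) * (E * (CC v b).1 + (CC v b).2)) := by
    intro a b
    rw [div_sub_div _ _ (hD a) (hD b)]
    congr 1
    unfold BB
    ring
  refine ⟨z, ?_, ?_⟩
  · -- injectivity
    intro x y hxy
    by_contra hne
    have hval : x.val ≠ y.val := by
      intro h
      apply hne
      have hx' : ((x.val : ℕ) : ZMod n) = x := ZMod.natCast_rightInverse x
      have hy' : ((y.val : ℕ) : ZMod n) = y := ZMod.natCast_rightInverse y
      rw [← hx', ← hy', h]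
    have hx : z x = z ((x.val : ℕ) : ZMod n) := by rw [ZMod.natCast_val, ZMod.cast_id]
    have hy : z y = z ((y.val : ℕ) : ZMod n) := by rw [ZMod.natCast_val, ZMod.cast_id]
    have h0 : BB v x.val y.val /
        ((E * (CC v x.val).1 + (CC v x.val).2) * (E * (CC v y.val).1 + (CC v y.val).2)) = 0 := by
      rw [← hsub]
      rw [← hz x.val, ← hz y.val, ← hx, ← hy, hxy]
      ring
    rw [div_eq_zero_iff] at h0
    rcases h0 with h0 | h0
    · exact hball x.val y.val (ZMod.val_lt x) (ZMod.val_lt y) hval h0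
    · exact mul_ne_zero (hD x.val) (hD y.val) h0
  · -- cross-ratios
    intro e he
    obtain ⟨i, j, hch, rfl⟩ := mem_ch he
    obtain ⟨hij, hjn, hni⟩ := hch
    have hcast1 : ((i : ZMod n)) + 1 = (((i+1 : ℕ)) : ZMod n) := by push_cast; ring
    have hcast2 : ((j : ZMod n)) + 1 = (((j+1 : ℕ)) : ZMod n) := by push_cast; ring
    have hB1 : BB v i j ≠ 0 := hball i j (by omega) (by omega) (by omega)
    have hB2 : BB v (i+1) (j+1) ≠ 0 := by
      rcases Nat.lt_or_ge (j+1) n with h | h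
      · exact hball (i+1) (j+1) (by omega) h (by omega)
      · have hjn1 : j + 1 = n := by omega
        rw [hjn1, Bn_per, BB_symm]
        exact neg_ne_zero.mpr (hball 0 (i+1) (by omega) (by omega) (by omega))
    have hval : vv v i j = RR v i j := master hn hv0 hrel i j ⟨hij, hjn, hni⟩
    show u z s((i : ZMod n), (j : ZMod n)) = v s((i : ZMod n), (j : ZMod n))
    unfold u
    rw [Sym2.lift_mk]
    simp only [hcast1, hcast2, hz]
    rw [hsub i (j+1), hsub (i+1) j, hsub i j, hsub (i+1) (j+1)]
    have : v s((i : ZMod n), (j : ZMod n)) = RR v i j := hval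
    rw [this]
    unfold RR
    field_simp [hB1, hB2, hD i, hD (i+1), hD j, hD (j+1)]

end Dev

/-- For `n ≥ 4`: any nowhere-zero complex solution of all primitive
u-relations is realized as the dihedral coordinates of an injective configuration
`z : ZMod n → ℂ`. -/
theorem u_relations_realize (n : ℕ) [NeZero n] (hn : 4 ≤ n) (v : Sym2 (ZMod n) → ℂ)
    (hv0 : ∀ e ∈ chords n, v e ≠ 0)
    (hrel : ∀ e ∈ chords n,
      v e + ∏ f ∈ (chords n).filter (fun f => Crosses n f e), v f = 1) :
    ∃ z : ZMod n → ℂ, Function.Injective z ∧ ∀ e ∈ chords n, u z e = v e := by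
  exact realize hn hv0 hrel

end M0n
end

section
/- Let n ≥ 4 be an integer and let z, z' : ZMod n → ℂ be injective maps with u_e(z) = u_e(z') for every chord e ∈ E. Then z and z' differ by a fractional linear transformation: there exist a, b, c, d ∈ ℂ with a·d − b·c ≠ 0 such that for every i ∈ ZMod n, c·z(i) + d ≠ 0 and z'(i) = (a·z(i) + b)/(c·z(i) + d). -/
namespace M0n

lemma cast_ne_cast (n : ℕ) [NeZero n] {a b : ℕ} (ha : a < n) (hb : b < n)
    (hab : a ≠ b) : (a : ZMod n) ≠ (b : ZMod n) := by
  intro hEq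
  apply hab
  have := congrArg ZMod.val hEq
  rwa [ZMod.val_cast_of_lt ha, ZMod.val_cast_of_lt hb] at this

lemma chord_mem (n : ℕ) [NeZero n] (hn : 4 ≤ n) {k : ℕ} (hk2 : 2 ≤ k)
    (hkn : k ≤ n - 2) : s((0 : ZMod n), (k : ZMod n)) ∈ chords n := by
  have hn1 : ((n - 1 : ℕ) : ZMod n) = 0 - 1 := by
    rw [Nat.cast_sub (by omega : 1 ≤ n), ZMod.natCast_self]
    push_cast; ring
  simp only [chords, Finset.mem_filter, Finset.mem_univ, true_and]
  intro i j hij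
  rw [Sym2.eq_iff] at hij
  rcases hij with ⟨hi, hj⟩ | ⟨hi, hj⟩
  · subst hi; subst hj
    refine ⟨?_, ?_, ?_⟩
    · rw [← hn1]
      exact cast_ne_cast n (by omega) (by omega) (by omega)
    · rw [show (0 : ZMod n) = ((0 : ℕ) : ZMod n) from by push_cast; ring]
      exact cast_ne_cast n (by omega) (by omega) (by omega)
    · rw [show (0 : ZMod n) + 1 = ((1 : ℕ) : ZMod n) from by push_cast; ring]
      exact cast_ne_cast n (by omega) (by omega) (by omega)
  · subst hi; subst hj
    have h0n : (0 : ZMod n) = ((0 : ℕ) : ZMod n) := by push_cast; ring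
    refine ⟨?_, ?_, ?_⟩
    · rw [show (k : ZMod n) - 1 = ((k - 1 : ℕ) : ZMod n) from by
        rw [Nat.cast_sub (by omega : 1 ≤ k)]; push_cast; ring, h0n]
      exact cast_ne_cast n (by omega) (by omega) (by omega)
    · rw [h0n]
      exact cast_ne_cast n (by omega) (by omega) (by omega)
    · rw [show (k : ZMod n) + 1 = ((k + 1 : ℕ) : ZMod n) from by push_cast; ring, h0n]
      exact cast_ne_cast n (by omega) (by omega) (by omega)

/-- For `n ≥ 4`, two injective configurations `z, z' : ZMod n → ℂ` with
the same dihedral coordinates differ by a fractional linear transformation. -/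
theorem same_u_iff_mobius (n : ℕ) [NeZero n] (hn : 4 ≤ n) (z z' : ZMod n → ℂ)
    (hz : Function.Injective z) (hz' : Function.Injective z')
    (h : ∀ e ∈ chords n, u z e = u z' e) :
    ∃ a b c d : ℂ, a * d - b * c ≠ 0 ∧
      ∀ i : ZMod n, c * z i + d ≠ 0 ∧ z' i = (a * z i + b) / (c * z i + d) := by
  have hn4 : 4 ≤ n := hn
  -- distinctness of small indices
  have hzne : ∀ i j : ZMod n, i ≠ j → z i - z j ≠ 0 := fun i j hij =>
    sub_ne_zero.mpr fun e => hij (hz e)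
  have hz'ne : ∀ i j : ZMod n, i ≠ j → z' i - z' j ≠ 0 := fun i j hij =>
    sub_ne_zero.mpr fun e => hij (hz' e)
  have hcast : ∀ a b : ℕ, a < n → b < n → a ≠ b → (a : ZMod n) ≠ (b : ZMod n) :=
    fun a b ha hb hab => cast_ne_cast n ha hb hab
  have h0 : ((0 : ℕ) : ZMod n) = (0 : ZMod n) := by push_cast; ring
  have h1 : ((1 : ℕ) : ZMod n) = (1 : ZMod n) := by push_cast; ring
  have h2 : ((2 : ℕ) : ZMod n) = (2 : ZMod n) := by push_cast; ring
  have h01 : (0 : ZMod n) ≠ 1 := by rw [← h0, ← h1]; exact hcast 0 1 (by omega) (by omega) (by omega)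
  have h02 : (0 : ZMod n) ≠ 2 := by rw [← h0, ← h2]; exact hcast 0 2 (by omega) (by omega) (by omega)
  have h12 : (1 : ZMod n) ≠ 2 := by rw [← h1, ← h2]; exact hcast 1 2 (by omega) (by omega) (by omega)
  have h0k : ∀ k : ℕ, 0 < k → k < n → (0 : ZMod n) ≠ (k : ZMod n) := fun k hk hkn => by
    rw [← h0]; exact hcast 0 k (by omega) hkn (by omega)
  have h1k : ∀ k : ℕ, 1 < k → k < n → (1 : ZMod n) ≠ (k : ZMod n) := fun k hk hkn => by
    rw [← h1]; exact hcast 1 k (by omega) hkn (by omega)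
  -- the key cross-ratio equation
  have keyNat : ∀ k : ℕ, 3 ≤ k → k ≤ n - 1 →
      (z 1 - z 2) * (z 0 - z (k : ZMod n)) * (z' 0 - z' 2) * (z' 1 - z' (k : ZMod n))
        = (z' 1 - z' 2) * (z' 0 - z' (k : ZMod n)) * (z 0 - z 2) * (z 1 - z (k : ZMod n)) := by
    intro k hk3
    induction k, hk3 using Nat.le_induction with
    | base =>
      intro _
      have hu := h _ (chord_mem n hn (le_refl 2) (by omega))
      rw [u_mk, u_mk] at hu
      have e23 : ((2 : ℕ) : ZMod n) + 1 = ((3 : ℕ) : ZMod n) := by push_cast; ring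
      have e01 : (0 : ZMod n) + 1 = 1 := by ring
      rw [e23, e01, h2] at hu
      rw [div_eq_div_iff (mul_ne_zero (hzne _ _ h02) (hzne _ _ (h1k 3 (by omega) (by omega))))
        (mul_ne_zero (hz'ne _ _ h02) (hz'ne _ _ (h1k 3 (by omega) (by omega))))] at hu
      linear_combination hu
    | succ k hk ih =>
      intro hk1
      have hkn : k < n := by omega
      have hKn : k + 1 < n := by omega
      have ihk := ih (by omega)
      have hu := h _ (chord_mem n hn (by omega : 2 ≤ k) (by omega))
      rw [u_mk] at hu
      rw [u_mk] at hu
      have eK : (k : ZMod n) + 1 = ((k + 1 : ℕ) : ZMod n) := by push_cast; ring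
      have e01 : (0 : ZMod n) + 1 = 1 := by ring
      rw [eK, e01] at hu
      rw [div_eq_div_iff
        (mul_ne_zero (hzne _ _ (h0k k (by omega) hkn)) (hzne _ _ (h1k (k+1) (by omega) hKn)))
        (mul_ne_zero (hz'ne _ _ (h0k k (by omega) hkn)) (hz'ne _ _ (h1k (k+1) (by omega) hKn)))]
        at hu
      have cne : (z 0 - z (k : ZMod n)) * (z 1 - z (k : ZMod n)) *
          (z' 0 - z' (k : ZMod n)) * (z' 1 - z' (k : ZMod n)) ≠ 0 :=
        mul_ne_zero (mul_ne_zero (mul_ne_zero (hzne _ _ (h0k k (by omega) hkn))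
          (hzne _ _ (h1k k (by omega) hkn))) (hz'ne _ _ (h0k k (by omega) hkn)))
          (hz'ne _ _ (h1k k (by omega) hkn))
      apply mul_right_cancel₀ cne
      linear_combination
        ((z 1 - z 2) * (z 0 - z (k : ZMod n)) * (z' 0 - z' 2) * (z' 1 - z' (k : ZMod n))) * hu +
        ((z' 0 - z' ((k+1 : ℕ) : ZMod n)) * (z' 1 - z' (k : ZMod n)) *
          (z 0 - z (k : ZMod n)) * (z 1 - z ((k+1 : ℕ) : ZMod n))) * ihk
  have key : ∀ i : ZMod n,
      (z 1 - z 2) * (z 0 - z i) * (z' 0 - z' 2) * (z' 1 - z' i)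
        = (z' 1 - z' 2) * (z' 0 - z' i) * (z 0 - z 2) * (z 1 - z i) := by
    intro i
    have hi : ((i.val : ℕ) : ZMod n) = i := ZMod.natCast_zmod_val i
    have hlt : i.val < n := ZMod.val_lt i
    rcases lt_or_ge i.val 3 with hsm | hbig
    · have hval : i.val = 0 ∨ i.val = 1 ∨ i.val = 2 := by omega
      rcases hval with e | e | e
      · rw [← hi, e, h0]; ring
      · rw [← hi, e, h1]; ring
      · rw [← hi, e, h2]; ring
    · rw [← hi]
      exact keyNat i.val hbig (by omega)
  -- the Möbius transformation
  refine ⟨-(z' 0 - z' 2) * z' 1 * (z 1 - z 2) + (z' 1 - z' 2) * z' 0 * (z 0 - z 2),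
      (z' 0 - z' 2) * z' 1 * (z 1 - z 2) * z 0 - (z' 1 - z' 2) * z' 0 * (z 0 - z 2) * z 1,
      -(z' 0 - z' 2) * (z 1 - z 2) + (z' 1 - z' 2) * (z 0 - z 2),
      (z' 0 - z' 2) * (z 1 - z 2) * z 0 - (z' 1 - z' 2) * (z 0 - z 2) * z 1, ?_, ?_⟩
  · have hdet : (-(z' 0 - z' 2) * z' 1 * (z 1 - z 2) + (z' 1 - z' 2) * z' 0 * (z 0 - z 2)) *
        ((z' 0 - z' 2) * (z 1 - z 2) * z 0 - (z' 1 - z' 2) * (z 0 - z 2) * z 1) -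
        ((z' 0 - z' 2) * z' 1 * (z 1 - z 2) * z 0 - (z' 1 - z' 2) * z' 0 * (z 0 - z 2) * z 1) *
        (-(z' 0 - z' 2) * (z 1 - z 2) + (z' 1 - z' 2) * (z 0 - z 2))
        = (z' 1 - z' 2) * (z' 0 - z' 2) * (z' 0 - z' 1) *
          (z 1 - z 2) * (z 0 - z 2) * (z 0 - z 1) := by ring
    rw [hdet]
    exact mul_ne_zero (mul_ne_zero (mul_ne_zero (mul_ne_zero (mul_ne_zero
      (hz'ne _ _ h12) (hz'ne _ _ h02)) (hz'ne _ _ h01)) (hzne _ _ h12)) (hzne _ _ h02))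
      (hzne _ _ h01)
  · intro i
    have hkey := key i
    have hPw : ((z' 0 - z' 2) * (z 1 - z 2) * (z 0 - z i)) * (z' 1 - z' i)
        = ((z' 1 - z' 2) * (z 0 - z 2) * (z 1 - z i)) * (z' 0 - z' i) := by
      linear_combination hkey
    have hcd : (-(z' 0 - z' 2) * (z 1 - z 2) + (z' 1 - z' 2) * (z 0 - z 2)) * z i +
        ((z' 0 - z' 2) * (z 1 - z 2) * z 0 - (z' 1 - z' 2) * (z 0 - z 2) * z 1)
        = ((z' 0 - z' 2) * (z 1 - z 2) * (z 0 - z i))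
          - ((z' 1 - z' 2) * (z 0 - z 2) * (z 1 - z i)) := by ring
    have hPQ : ((z' 0 - z' 2) * (z 1 - z 2) * (z 0 - z i))
        - ((z' 1 - z' 2) * (z 0 - z 2) * (z 1 - z i)) ≠ 0 := by
      intro hpq
      have hPQeq : ((z' 0 - z' 2) * (z 1 - z 2) * (z 0 - z i))
          = ((z' 1 - z' 2) * (z 0 - z 2) * (z 1 - z i)) := sub_eq_zero.mp hpq
      by_cases hP0 : ((z' 0 - z' 2) * (z 1 - z 2) * (z 0 - z i)) = 0
      · have hQ0 : ((z' 1 - z' 2) * (z 0 - z 2) * (z 1 - z i)) = 0 := hPQeq ▸ hP0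
        have hzi0 : z 0 - z i = 0 := by
          rcases mul_eq_zero.mp hP0 with h' | h'
          · exact absurd h' (mul_ne_zero (hz'ne _ _ h02) (hzne _ _ h12))
          · exact h'
        have hzi1 : z 1 - z i = 0 := by
          rcases mul_eq_zero.mp hQ0 with h' | h'
          · exact absurd h' (mul_ne_zero (hz'ne _ _ h12) (hzne _ _ h02))
          · exact h'
        have e0 : (0 : ZMod n) = i := hz (sub_eq_zero.mp hzi0)
        have e1 : (1 : ZMod n) = i := hz (sub_eq_zero.mp hzi1)
        exact h01 (e0.trans e1.symm)
      · have hPP : ((z' 0 - z' 2) * (z 1 - z 2) * (z 0 - z i)) * (z' 1 - z' i)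
            = ((z' 0 - z' 2) * (z 1 - z 2) * (z 0 - z i)) * (z' 0 - z' i) := by
          rw [hPw]; rw [hPQeq]
        have h10 : z' 1 - z' i = z' 0 - z' i := mul_left_cancel₀ hP0 hPP
        exact h01 (hz' (sub_left_inj.mp h10)).symm
    constructor
    · rw [hcd]; exact hPQ
    · rw [hcd, eq_div_iff hPQ]
      linear_combination -hPw

end M0n
end

section
/- Let n ≥ 5 be an integer and let z : ZMod n → ℝ be injective with u_{{0,2}}(z) < 0 (the chord between the labels n ≡ 0 and 2). Let τ ∈ Perm(ZMod n) be the transposition exchanging 1 and 2. Then Neg(z ∘ τ) < Neg(z), i.e. the number of chords e with u_e(z ∘ τ) < 0 is strictly smaller than the number of chords e with u_e(z) < 0. -/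
namespace M0n

private lemma swapRA' (a b c d s t : ℝ) (hst : s ≤ t)
    (h4 : (a-d)*(b-c)*((a-c)*(b-d)) < 0)
    (h1 : ((b-s)*(b-t))*((c-s)*(c-t)) < 0)
    (h0 : 0 ≤ ((a-s)*(a-t))*((b-s)*(b-t)))
    (h2 : 0 ≤ ((c-s)*(c-t))*((d-s)*(d-t))) : False := by
  rcases mul_neg_iff.mp h1 with ⟨hb, hc⟩ | ⟨hb, hc⟩
  · have hFa : 0 ≤ (a-s)*(a-t) := by
      by_contra h; push_neg at h
      linarith [mul_neg_of_neg_of_pos h hb]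
    have hFd : (d-s)*(d-t) ≤ 0 := by
      by_contra h; push_neg at h
      linarith [mul_neg_of_neg_of_pos hc h]
    have hsc : s < c := by
      by_contra h; push_neg at h
      linarith [mul_nonneg (by linarith : (0:ℝ) ≤ s - c) (by linarith : (0:ℝ) ≤ t - c)]
    have hct : c < t := by
      by_contra h; push_neg at h
      linarith [mul_nonneg (by linarith : (0:ℝ) ≤ c - s) (by linarith : (0:ℝ) ≤ c - t)]
    have hsd : s ≤ d := by
      by_contra h; push_neg at h
      linarith [mul_pos (by linarith : (0:ℝ) < s - d) (by linarith : (0:ℝ) < t - d)]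
    have hdt : d ≤ t := by
      by_contra h; push_neg at h
      linarith [mul_pos (by linarith : (0:ℝ) < d - s) (by linarith : (0:ℝ) < d - t)]
    have ha : a ≤ s ∨ t ≤ a := by
      rcases le_or_gt a s with h | h
      · exact Or.inl h
      · right; by_contra h'; push_neg at h'
        linarith [mul_pos (by linarith : (0:ℝ) < a - s) (by linarith : (0:ℝ) < t - a)]
    have hbd : b < s ∨ t < b := by
      rcases mul_pos_iff.mp hb with ⟨h1', h2'⟩ | ⟨h1', h2'⟩
      · right; linarith
      · left; linarith
    have q1 : 0 ≤ (c-a)*(d-a) := by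
      rcases ha with h | h
      · exact mul_nonneg (by linarith) (by linarith)
      · linarith [mul_nonneg (by linarith : (0:ℝ) ≤ a - c) (by linarith : (0:ℝ) ≤ a - d)]
    have q2 : 0 ≤ (c-b)*(d-b) := by
      rcases hbd with h | h
      · exact mul_nonneg (by linarith) (by linarith)
      · linarith [mul_nonneg (by linarith : (0:ℝ) ≤ b - c) (by linarith : (0:ℝ) ≤ b - d)]
    linarith [mul_nonneg q1 q2]
  · have hFa : (a-s)*(a-t) ≤ 0 := by
      by_contra h; push_neg at h
      linarith [mul_neg_of_pos_of_neg h hb]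
    have hFd : 0 ≤ (d-s)*(d-t) := by
      by_contra h; push_neg at h
      linarith [mul_neg_of_pos_of_neg hc h]
    have hsb : s < b := by
      by_contra h; push_neg at h
      linarith [mul_nonneg (by linarith : (0:ℝ) ≤ s - b) (by linarith : (0:ℝ) ≤ t - b)]
    have hbt : b < t := by
      by_contra h; push_neg at h
      linarith [mul_nonneg (by linarith : (0:ℝ) ≤ b - s) (by linarith : (0:ℝ) ≤ b - t)]
    have hsa : s ≤ a := by
      by_contra h; push_neg at h
      linarith [mul_pos (by linarith : (0:ℝ) < s - a) (by linarith : (0:ℝ) < t - a)]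
    have hat : a ≤ t := by
      by_contra h; push_neg at h
      linarith [mul_pos (by linarith : (0:ℝ) < a - s) (by linarith : (0:ℝ) < a - t)]
    have hcd : c < s ∨ t < c := by
      rcases mul_pos_iff.mp hc with ⟨h1', h2'⟩ | ⟨h1', h2'⟩
      · right; linarith
      · left; linarith
    have hdd : d ≤ s ∨ t ≤ d := by
      rcases le_or_gt d s with h | h
      · exact Or.inl h
      · right; by_contra h'; push_neg at h'
        linarith [mul_pos (by linarith : (0:ℝ) < d - s) (by linarith : (0:ℝ) < t - d)]
    have q1 : 0 ≤ (a-c)*(b-c) := by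
      rcases hcd with h | h
      · exact mul_nonneg (by linarith) (by linarith)
      · linarith [mul_nonneg (by linarith : (0:ℝ) ≤ c - a) (by linarith : (0:ℝ) ≤ c - b)]
    have q2 : 0 ≤ (a-d)*(b-d) := by
      rcases hdd with h | h
      · exact mul_nonneg (by linarith) (by linarith)
      · linarith [mul_nonneg (by linarith : (0:ℝ) ≤ d - a) (by linarith : (0:ℝ) ≤ d - b)]
    linarith [mul_nonneg q1 q2]

private lemma swapRA (a b c d s t : ℝ)
    (h4 : (a-d)*(b-c)*((a-c)*(b-d)) < 0)
    (h1 : (b-t)*(c-s)*((b-s)*(c-t)) < 0)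
    (h0 : 0 ≤ (a-t)*(b-s)*((a-s)*(b-t)))
    (h2 : 0 ≤ (c-t)*(d-s)*((c-s)*(d-t))) : False := by
  rcases le_total s t with h | h
  · exact swapRA' a b c d s t h h4 (by linarith) (by linarith) (by linarith)
  · exact swapRA' a b c d t s h h4 (by linarith) (by linarith) (by linarith)


private lemma mem_chords_of {n : ℕ} [NeZero n] {i j : ZMod n}
    (h1 : j ≠ i - 1) (h2 : j ≠ i) (h3 : j ≠ i + 1) : s(i, j) ∈ chords n := by
  have : IsChord n s(i, j) := by
    intro a b hab
    rcases Sym2.eq_iff.mp hab with ⟨ha, hb⟩ | ⟨ha, hb⟩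
    · subst ha; subst hb; exact ⟨h1, h2, h3⟩
    · subst ha; subst hb
      exact ⟨fun hcon => h3 (by rw [hcon]; ring), Ne.symm h2,
        fun hcon => h1 (by rw [hcon]; ring)⟩
  simpa [chords] using this

/-- For `n ≥ 5` and injective `z : ZMod n → ℝ` with `u_{0,2}(z) < 0`,
swapping the labels `1` and `2` strictly decreases the number of negative chords. -/
theorem swap_decreases_neg_length_two (n : ℕ) [NeZero n] (hn : 5 ≤ n) (z : ZMod n → ℝ)
    (hz : Function.Injective z) (hneg : u z s((0 : ZMod n), (2 : ZMod n)) < 0) :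
    negCount n (fun k => z (Equiv.swap (1 : ZMod n) (2 : ZMod n) k)) < negCount n z := by
  classical
  -- numeral distinctness in `ZMod n`
  have hne : ∀ a b : ℕ, a < n → b < n → a ≠ b → ((a : ZMod n) ≠ (b : ZMod n)) := by
    intro a b ha hb hab h
    apply hab
    have h' := congrArg ZMod.val h
    rwa [ZMod.val_cast_of_lt ha, ZMod.val_cast_of_lt hb] at h'
  have ne01 : (0 : ZMod n) ≠ 1 := by simpa using hne 0 1 (by omega) (by omega) (by omega)
  have ne02 : (0 : ZMod n) ≠ 2 := by simpa using hne 0 2 (by omega) (by omega) (by omega)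
  have ne20 : (2 : ZMod n) ≠ 0 := ne02.symm
  have ne21 : (2 : ZMod n) ≠ 1 := by simpa using hne 2 1 (by omega) (by omega) (by omega)
  have ne30 : (3 : ZMod n) ≠ 0 := by simpa using hne 3 0 (by omega) (by omega) (by omega)
  have ne31 : (3 : ZMod n) ≠ 1 := by simpa using hne 3 1 (by omega) (by omega) (by omega)
  have ne32 : (3 : ZMod n) ≠ 2 := by simpa using hne 3 2 (by omega) (by omega) (by omega)
  have e01 : (0 : ZMod n) + 1 = 1 := zero_add 1
  have e12 : (1 : ZMod n) + 1 = 2 := one_add_one_eq_two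
  have e23 : (2 : ZMod n) + 1 = 3 := by norm_num
  set w : ZMod n → ℝ := fun k => z (Equiv.swap (1 : ZMod n) 2 k) with hwdef
  have hw1 : w 1 = z 2 := by rw [hwdef]; simp
  have hw2 : w 2 = z 1 := by rw [hwdef]; simp
  have hwk : ∀ k : ZMod n, k ≠ 1 → k ≠ 2 → w k = z k := by
    intro k h1 h2
    rw [hwdef]; simp [Equiv.swap_apply_of_ne_of_ne h1 h2]
  have hw0 : w 0 = z 0 := hwk 0 ne01 ne02
  have hw3 : w 3 = z 3 := hwk 3 ne31 ne32
  have hu : ∀ (f : ZMod n → ℝ) (i j : ZMod n), u f s(i, j) =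
      ((f i - f (j + 1)) * (f (i + 1) - f j)) / ((f i - f j) * (f (i + 1) - f (j + 1))) :=
    fun f i j => rfl
  have huneg : ∀ (f : ZMod n → ℝ) (i j : ZMod n), (u f s(i, j) < 0 ↔
      ((f i - f (j + 1)) * (f (i + 1) - f j)) * ((f i - f j) * (f (i + 1) - f (j + 1))) < 0) :=
    fun f i j => by rw [hu]; exact div_neg_iff.trans mul_neg_iff.symm
  have ischord : ∀ {e : Sym2 (ZMod n)}, e ∈ chords n → IsChord n e := by
    intro e he
    simpa [chords] using he
  have hzne : ∀ x y : ZMod n, x ≠ y → z x - z y ≠ 0 :=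
    fun x y h => sub_ne_zero.mpr (fun hc => h (hz hc))
  have h4 : (z 0 - z 3) * (z 1 - z 2) * ((z 0 - z 2) * (z 1 - z 3)) < 0 := by
    have h := (huneg z 0 2).mp hneg
    rwa [e01, e23] at h
  have hPw02 : 0 < (w 0 - w (2 + 1)) * (w (0 + 1) - w 2) * ((w 0 - w 2) * (w (0 + 1) - w (2 + 1))) := by
    rw [e01, e23, hw0, hw1, hw2, hw3]
    nlinarith [h4, sq_nonneg ((z 0 - z 3) * (z 1 - z 2))]
  -- the three local cases
  have case1 : ∀ m : ZMod n, m ≠ 0 → m ≠ 1 → m ≠ 2 →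
      ¬ u z s((1 : ZMod n), m) < 0 → u w s((1 : ZMod n), m) < 0 → False := by
    intro m hm0 hm1 hm2 hnz hnw
    have hm1' : m + 1 ≠ 1 := fun h => hm0 (add_right_cancel (h.trans e01.symm))
    have hm2' : m + 1 ≠ 2 := fun h => hm1 (add_right_cancel (h.trans e12.symm))
    have h := (huneg w 1 m).mp hnw
    rw [e12, hw1, hw2, hwk m hm1 hm2, hwk (m + 1) hm1' hm2'] at h
    apply hnz
    rw [huneg z 1 m, e12]
    linarith [h]
  have caseFar : ∀ i j : ZMod n, i ≠ 0 → i ≠ 1 → i ≠ 2 → j ≠ 0 → j ≠ 1 → j ≠ 2 →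
      ¬ u z s(i, j) < 0 → u w s(i, j) < 0 → False := by
    intro i j hi0 hi1 hi2 hj0 hj1 hj2 hnz hnw
    have hi1' : i + 1 ≠ 1 := fun h => hi0 (add_right_cancel (h.trans e01.symm))
    have hi2' : i + 1 ≠ 2 := fun h => hi1 (add_right_cancel (h.trans e12.symm))
    have hj1' : j + 1 ≠ 1 := fun h => hj0 (add_right_cancel (h.trans e01.symm))
    have hj2' : j + 1 ≠ 2 := fun h => hj1 (add_right_cancel (h.trans e12.symm))
    have h := (huneg w i j).mp hnw
    rw [hwk i hi1 hi2, hwk (i + 1) hi1' hi2', hwk j hj1 hj2, hwk (j + 1) hj1' hj2'] at h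
    exact hnz ((huneg z i j).mpr h)
  have case0 : ∀ m : ZMod n, m + 1 ≠ 0 → m ≠ 0 → m ≠ 1 → m ≠ 2 →
      ¬ u z s((0 : ZMod n), m) < 0 → u w s((0 : ZMod n), m) < 0 →
      (Sym2.map (Equiv.swap (0 : ZMod n) 2) s((0 : ZMod n), m) ∈ chords n ∧
       u z (Sym2.map (Equiv.swap (0 : ZMod n) 2) s((0 : ZMod n), m)) < 0 ∧
       Sym2.map (Equiv.swap (0 : ZMod n) 2) s((0 : ZMod n), m) ≠ s((0 : ZMod n), (2 : ZMod n)) ∧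
       ¬ u w (Sym2.map (Equiv.swap (0 : ZMod n) 2) s((0 : ZMod n), m)) < 0) := by
    intro m hmn1 hm0 hm1 hm2 hnz hnw
    have hm1' : m + 1 ≠ 1 := fun h => hm0 (add_right_cancel (h.trans e01.symm))
    have hm2' : m + 1 ≠ 2 := fun h => hm1 (add_right_cancel (h.trans e12.symm))
    have hQ0ne : (z 0 - z (m + 1)) * (z 1 - z m) * ((z 0 - z m) * (z 1 - z (m + 1))) ≠ 0 :=
      mul_ne_zero
        (mul_ne_zero (hzne _ _ (fun h => hmn1 h.symm)) (hzne _ _ (Ne.symm hm1)))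
        (mul_ne_zero (hzne _ _ (Ne.symm hm0)) (hzne _ _ (fun h => hm1' h.symm)))
    have hQ0 : 0 < (z 0 - z (m + 1)) * (z 1 - z m) * ((z 0 - z m) * (z 1 - z (m + 1))) := by
      rcases hQ0ne.lt_or_gt with h | h
      · exact absurd ((huneg z 0 m).mpr (by rw [e01]; exact h)) hnz
      · exact h
    have hQW0 : (z 0 - z (m + 1)) * (z 2 - z m) * ((z 0 - z m) * (z 2 - z (m + 1))) < 0 := by
      have h := (huneg w 0 m).mp hnw
      rwa [e01, hw0, hw1, hwk m hm1 hm2, hwk (m + 1) hm1' hm2'] at h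
    have hsq1 : 0 < ((z 1 - z m) * (z 1 - z (m + 1))) ^ 2 :=
      lt_of_le_of_ne (sq_nonneg _) (Ne.symm (pow_ne_zero 2
        (mul_ne_zero (hzne _ _ (Ne.symm hm1)) (hzne _ _ (fun h => hm1' h.symm)))))
    have hQ1 : (z 1 - z (m + 1)) * (z 2 - z m) * ((z 1 - z m) * (z 2 - z (m + 1))) < 0 := by
      by_contra hcon; push_neg at hcon
      have hid : ((z 0 - z (m + 1)) * (z 2 - z m) * ((z 0 - z m) * (z 2 - z (m + 1)))) *
            ((z 1 - z m) * (z 1 - z (m + 1))) ^ 2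
          = ((z 0 - z (m + 1)) * (z 1 - z m) * ((z 0 - z m) * (z 1 - z (m + 1)))) *
            ((z 1 - z (m + 1)) * (z 2 - z m) * ((z 1 - z m) * (z 2 - z (m + 1)))) := by ring
      linarith [hid, mul_nonneg hQ0.le hcon, mul_neg_of_neg_of_pos hQW0 hsq1]
    have hQ2 : (z 2 - z (m + 1)) * (z 3 - z m) * ((z 2 - z m) * (z 3 - z (m + 1))) < 0 := by
      by_contra hcon; push_neg at hcon
      exact swapRA (z 0) (z 1) (z 2) (z 3) (z m) (z (m + 1)) h4 hQ1 hQ0.le hcon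
    have hm3 : m ≠ 3 := by
      intro h; rw [h] at hQ2; simp at hQ2
    have hmap : Sym2.map (Equiv.swap (0 : ZMod n) 2) s((0 : ZMod n), m) = s((2 : ZMod n), m) := by
      rw [Sym2.map_pair_eq, Equiv.swap_apply_left, Equiv.swap_apply_of_ne_of_ne hm0 hm2]
    rw [hmap]
    refine ⟨?_, ?_, ?_, ?_⟩
    · apply mem_chords_of
      · rw [show (2 : ZMod n) - 1 = 1 by norm_num]; exact hm1
      · exact hm2
      · rw [e23]; exact hm3
    · rw [huneg z 2 m, e23]; exact hQ2
    · intro h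
      rcases Sym2.eq_iff.mp h with ⟨h', _⟩ | ⟨_, h'⟩
      · exact ne20 h'
      · exact hm0 h'
    · intro hcon
      have h := (huneg w 2 m).mp hcon
      rw [e23, hw2, hw3, hwk m hm1 hm2, hwk (m + 1) hm1' hm2'] at h
      have hsq2 : 0 < ((z 2 - z m) * (z 2 - z (m + 1))) ^ 2 :=
        lt_of_le_of_ne (sq_nonneg _) (Ne.symm (pow_ne_zero 2
          (mul_ne_zero (hzne _ _ (Ne.symm hm2)) (hzne _ _ (fun hh => hm2' hh.symm)))))
      have hid : ((z 1 - z (m + 1)) * (z 3 - z m) * ((z 1 - z m) * (z 3 - z (m + 1)))) *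
            ((z 2 - z m) * (z 2 - z (m + 1))) ^ 2
          = ((z 1 - z (m + 1)) * (z 2 - z m) * ((z 1 - z m) * (z 2 - z (m + 1)))) *
            ((z 2 - z (m + 1)) * (z 3 - z m) * ((z 2 - z m) * (z 3 - z (m + 1)))) := by ring
      linarith [hid, mul_pos_of_neg_of_neg hQ1 hQ2, mul_neg_of_neg_of_pos h hsq2]
  have case2 : ∀ m : ZMod n, m ≠ 0 → m ≠ 1 → m ≠ 2 → m ≠ 3 →
      ¬ u z s((2 : ZMod n), m) < 0 → u w s((2 : ZMod n), m) < 0 →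
      (Sym2.map (Equiv.swap (0 : ZMod n) 2) s((2 : ZMod n), m) ∈ chords n ∧
       u z (Sym2.map (Equiv.swap (0 : ZMod n) 2) s((2 : ZMod n), m)) < 0 ∧
       Sym2.map (Equiv.swap (0 : ZMod n) 2) s((2 : ZMod n), m) ≠ s((0 : ZMod n), (2 : ZMod n)) ∧
       ¬ u w (Sym2.map (Equiv.swap (0 : ZMod n) 2) s((2 : ZMod n), m)) < 0) := by
    intro m hm0 hm1 hm2 hm3 hnz hnw
    have hm1' : m + 1 ≠ 1 := fun h => hm0 (add_right_cancel (h.trans e01.symm))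
    have hm2' : m + 1 ≠ 2 := fun h => hm1 (add_right_cancel (h.trans e12.symm))
    have hm3' : m + 1 ≠ 3 := fun h => hm2 (add_right_cancel (h.trans e23.symm))
    have hQ2ne : (z 2 - z (m + 1)) * (z 3 - z m) * ((z 2 - z m) * (z 3 - z (m + 1))) ≠ 0 :=
      mul_ne_zero
        (mul_ne_zero (hzne _ _ (fun h => hm2' h.symm)) (hzne _ _ (Ne.symm hm3)))
        (mul_ne_zero (hzne _ _ (Ne.symm hm2)) (hzne _ _ (fun h => hm3' h.symm)))
    have hQ2 : 0 < (z 2 - z (m + 1)) * (z 3 - z m) * ((z 2 - z m) * (z 3 - z (m + 1))) := by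
      rcases hQ2ne.lt_or_gt with h | h
      · exact absurd ((huneg z 2 m).mpr (by rw [e23]; exact h)) hnz
      · exact h
    have hQW2 : (z 1 - z (m + 1)) * (z 3 - z m) * ((z 1 - z m) * (z 3 - z (m + 1))) < 0 := by
      have h := (huneg w 2 m).mp hnw
      rwa [e23, hw2, hw3, hwk m hm1 hm2, hwk (m + 1) hm1' hm2'] at h
    have hsq2 : 0 < ((z 2 - z m) * (z 2 - z (m + 1))) ^ 2 :=
      lt_of_le_of_ne (sq_nonneg _) (Ne.symm (pow_ne_zero 2
        (mul_ne_zero (hzne _ _ (Ne.symm hm2)) (hzne _ _ (fun hh => hm2' hh.symm)))))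
    have hQ1 : (z 1 - z (m + 1)) * (z 2 - z m) * ((z 1 - z m) * (z 2 - z (m + 1))) < 0 := by
      by_contra hcon; push_neg at hcon
      have hid : ((z 1 - z (m + 1)) * (z 3 - z m) * ((z 1 - z m) * (z 3 - z (m + 1)))) *
            ((z 2 - z m) * (z 2 - z (m + 1))) ^ 2
          = ((z 1 - z (m + 1)) * (z 2 - z m) * ((z 1 - z m) * (z 2 - z (m + 1)))) *
            ((z 2 - z (m + 1)) * (z 3 - z m) * ((z 2 - z m) * (z 3 - z (m + 1)))) := by ring
      linarith [hid, mul_nonneg hcon hQ2.le, mul_neg_of_neg_of_pos hQW2 hsq2]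
    have hQ0 : (z 0 - z (m + 1)) * (z 1 - z m) * ((z 0 - z m) * (z 1 - z (m + 1))) < 0 := by
      by_contra hcon; push_neg at hcon
      exact swapRA (z 0) (z 1) (z 2) (z 3) (z m) (z (m + 1)) h4 hQ1 hcon hQ2.le
    have hmn1 : m + 1 ≠ 0 := by
      intro h; rw [h] at hQ0; simp at hQ0
    have hmap : Sym2.map (Equiv.swap (0 : ZMod n) 2) s((2 : ZMod n), m) = s((0 : ZMod n), m) := by
      rw [Sym2.map_pair_eq, Equiv.swap_apply_right, Equiv.swap_apply_of_ne_of_ne hm0 hm2]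
    rw [hmap]
    refine ⟨?_, ?_, ?_, ?_⟩
    · apply mem_chords_of
      · intro h; exact hmn1 (by rw [h]; ring)
      · exact hm0
      · rw [zero_add]; exact hm1
    · rw [huneg z 0 m, e01]; exact hQ0
    · intro h
      rcases Sym2.eq_iff.mp h with ⟨_, h'⟩ | ⟨h', _⟩
      · exact hm2 h'
      · exact ne02 h'
    · intro hcon
      have h := (huneg w 0 m).mp hcon
      rw [e01, hw0, hw1, hwk m hm1 hm2, hwk (m + 1) hm1' hm2'] at h
      have hsq1 : 0 < ((z 1 - z m) * (z 1 - z (m + 1))) ^ 2 :=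
        lt_of_le_of_ne (sq_nonneg _) (Ne.symm (pow_ne_zero 2
          (mul_ne_zero (hzne _ _ (Ne.symm hm1)) (hzne _ _ (fun hh => hm1' hh.symm)))))
      have hid : ((z 0 - z (m + 1)) * (z 2 - z m) * ((z 0 - z m) * (z 2 - z (m + 1)))) *
            ((z 1 - z m) * (z 1 - z (m + 1))) ^ 2
          = ((z 0 - z (m + 1)) * (z 1 - z m) * ((z 0 - z m) * (z 1 - z (m + 1)))) *
            ((z 1 - z (m + 1)) * (z 2 - z m) * ((z 1 - z m) * (z 2 - z (m + 1)))) := by ring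
      linarith [hid, mul_pos_of_neg_of_neg hQ0 hQ1, mul_neg_of_neg_of_pos h hsq1]
  have hrep : ∀ e : Sym2 (ZMod n), ∃ x y : ZMod n, e = s(x, y) :=
    fun e => Sym2.ind (fun x y => ⟨x, y, rfl⟩) e
  -- the flip classification
  have hflip : ∀ e, e ∈ chords n → ¬ u z e < 0 → u w e < 0 →
      (Sym2.map (Equiv.swap (0 : ZMod n) 2) e ∈ chords n ∧
       u z (Sym2.map (Equiv.swap (0 : ZMod n) 2) e) < 0 ∧
       Sym2.map (Equiv.swap (0 : ZMod n) 2) e ≠ s((0 : ZMod n), (2 : ZMod n)) ∧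
       ¬ u w (Sym2.map (Equiv.swap (0 : ZMod n) 2) e) < 0) := by
    intro e he hnz hnw
    obtain ⟨i, j, rfl⟩ := hrep e
    obtain ⟨hj1, hj2, hj3⟩ := ischord he i j rfl
    by_cases hi1 : i = 1
    · subst hi1
      refine absurd trivial (fun _ => ?_)
      exact case1 j (by rw [show (0 : ZMod n) = 1 - 1 by norm_num]; exact hj1) hj2
        (by rw [← e12]; exact hj3) hnz hnw
    by_cases hj1'' : j = 1
    · subst hj1''
      rw [show s(i, (1 : ZMod n)) = s((1 : ZMod n), i) from Sym2.eq_swap] at he hnz hnw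
      refine absurd trivial (fun _ => ?_)
      exact case1 i (fun h => hj3 (by rw [h, zero_add])) (Ne.symm hj2)
        (fun h => hj1 (by rw [h]; norm_num)) hnz hnw
    by_cases hi0 : i = 0
    · subst hi0
      by_cases hj2'' : j = 2
      · subst hj2''; exact absurd hneg hnz
      · exact case0 j (fun h => hj1 (by rw [← h]; ring)) hj2
          (by rw [zero_add] at hj3; exact hj3) hj2'' hnz hnw
    by_cases hj0 : j = 0
    · subst hj0
      rw [show s(i, (0 : ZMod n)) = s((0 : ZMod n), i) from Sym2.eq_swap] at he hnz hnw ⊢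
      by_cases hi2'' : i = 2
      · subst hi2''; exact absurd hneg hnz
      · exact case0 i (fun h => hj3 h.symm) (Ne.symm hj2) hi1 hi2'' hnz hnw
    by_cases hi2 : i = 2
    · subst hi2
      exact case2 j hj0 (by rw [show (1 : ZMod n) = 2 - 1 by norm_num]; exact hj1) hj2
        (by rw [← e23]; exact hj3) hnz hnw
    by_cases hj2' : j = 2
    · subst hj2'
      rw [show s(i, (2 : ZMod n)) = s((2 : ZMod n), i) from Sym2.eq_swap] at he hnz hnw ⊢
      exact case2 i hi0 hi1 (Ne.symm hj2) (fun h => hj1 (by rw [h]; norm_num)) hnz hnw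
    · exact absurd trivial (fun _ => caseFar i j hi0 hi1 hi2 hj0 hj1'' hj2' hnz hnw)
  -- counting
  have hcount : ∀ f : ZMod n → ℝ,
      negCount n f = ((chords n).filter (fun e => u f e < 0)).card := by
    intro f
    have hseteq : {e : Sym2 (ZMod n) | e ∈ chords n ∧ u f e < 0}
        = ↑((chords n).filter (fun e => u f e < 0)) := by
      ext e; simp [Finset.mem_filter]
    rw [negCount, hseteq, Set.ncard_coe_finset]
  have h02mem : s((0 : ZMod n), (2 : ZMod n)) ∈ chords n := by
    apply mem_chords_of
    · intro h
      exact ne30 (by rw [show (3 : ZMod n) = 2 + 1 from e23.symm, h]; ring)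
    · exact ne20
    · rw [zero_add]; exact ne21
  rw [hcount w, hcount z]
  set F := (chords n).filter (fun e => u w e < 0) with hF
  set G := (chords n).filter (fun e => u z e < 0) with hG
  have h02G : s((0 : ZMod n), (2 : ZMod n)) ∈ G := by
    rw [hG, Finset.mem_filter]; exact ⟨h02mem, hneg⟩
  have hcard : F.card ≤ (G.erase s((0 : ZMod n), (2 : ZMod n))).card := by
    apply Finset.card_le_card_of_injOn
      (fun e => if u z e < 0 then e else Sym2.map (Equiv.swap (0 : ZMod n) 2) e)
    · intro e heF
      dsimp only
      rw [Finset.mem_coe, Finset.mem_filter] at heF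
      obtain ⟨heC, hew⟩ := heF
      by_cases hez : u z e < 0
      · simp only [if_pos hez]
        rw [Finset.mem_coe, Finset.mem_erase]
        refine ⟨?_, by rw [hG, Finset.mem_filter]; exact ⟨heC, hez⟩⟩
        intro h; rw [h] at hew
        exact absurd ((huneg w 0 2).mp hew) (not_lt.mpr hPw02.le)
      · obtain ⟨hc1, hc2, hc3, _⟩ := hflip e heC hez hew
        simp only [if_neg hez]
        rw [Finset.mem_coe, Finset.mem_erase]
        exact ⟨hc3, by rw [hG, Finset.mem_filter]; exact ⟨hc1, hc2⟩⟩
    · intro e1 he1 e2 he2 heq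
      dsimp only at heq
      have he1' : e1 ∈ chords n ∧ u w e1 < 0 := by
        have h := Finset.mem_coe.mp he1; rw [hF] at h; exact Finset.mem_filter.mp h
      have he2' : e2 ∈ chords n ∧ u w e2 < 0 := by
        have h := Finset.mem_coe.mp he2; rw [hF] at h; exact Finset.mem_filter.mp h
      by_cases h1 : u z e1 < 0 <;> by_cases h2 : u z e2 < 0
      · rwa [if_pos h1, if_pos h2] at heq
      · rw [if_pos h1, if_neg h2] at heq
        obtain ⟨_, _, _, hc4⟩ := hflip e2 he2'.1 h2 he2'.2
        rw [← heq] at hc4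
        exact absurd he1'.2 hc4
      · rw [if_neg h1, if_pos h2] at heq
        obtain ⟨_, _, _, hc4⟩ := hflip e1 he1'.1 h1 he1'.2
        rw [heq] at hc4
        exact absurd he2'.2 hc4
      · rw [if_neg h1, if_neg h2] at heq
        exact Sym2.map.injective (Equiv.swap (0 : ZMod n) 2).injective heq
  calc F.card ≤ (G.erase s((0 : ZMod n), (2 : ZMod n))).card := hcard
    _ < G.card := Finset.card_erase_lt_of_mem h02G

end M0n
end
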